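/- arXiv:2310.13880 — 9 statements merged into one kernel-verified Lean document; each statement's English description precedes it below -/
import Mathlib

section
/- Let K be a field of characteristic 0 with a fixed algebraic closure K̄, and let f ∈ K[x] be an irreducible polynomial. For any two roots α, β of f in K̄, the number of roots of f lying in the subfield K(α) equals the number of roots of f lying in the subfield K(β). (Perlis, Theorem 2.1(i): the root cluster size is independent of the choice of root.) -/
open Polynomial IntermediateField

/-- Perlis, Theorem 2.1(i): for an irreducible polynomial `f` over a field `K` of
characteristic zero, the number of roots of `f` (in a fixed algebraic closure) lying in the
field generated by a single root is independent of the choice of that root. -/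
theorem cluster_size_independent_of_root {K : Type*} [Field K] [CharZero K]
    (f : K[X]) (hf : Irreducible f)
    (α β : AlgebraicClosure K)
    (hα : aeval α f = 0) (hβ : aeval β f = 0) :
    {x : AlgebraicClosure K | aeval x f = 0 ∧ x ∈ K⟮α⟯}.ncard =
      {x : AlgebraicClosure K | aeval x f = 0 ∧ x ∈ K⟮β⟯}.ncard := by
  have hβalg : IsAlgebraic K β := ⟨f, hf.ne_zero, hβ⟩
  have hmin : minpoly K β = f * Polynomial.C (f.leadingCoeff)⁻¹ :=
    (minpoly.eq_of_irreducible hf hβ).symm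
  have hαmin : aeval α (minpoly K β) = 0 := by
    rw [hmin, map_mul, hα, zero_mul]
  obtain ⟨σ, hσ⟩ := minpoly.exists_algEquiv_of_root hβalg hαmin
  have hmap : K⟮α⟯.map (σ : AlgebraicClosure K →ₐ[K] AlgebraicClosure K) = K⟮β⟯ := by
    rw [adjoin_map, Set.image_singleton]
    simp [hσ]
  have himg : (σ : AlgebraicClosure K → AlgebraicClosure K) ''
      {x : AlgebraicClosure K | aeval x f = 0 ∧ x ∈ K⟮α⟯} =
      {x : AlgebraicClosure K | aeval x f = 0 ∧ x ∈ K⟮β⟯} := by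
    have key : ∀ x : AlgebraicClosure K, aeval (σ x) f = σ (aeval x f) := fun x => by
      simpa using Polynomial.aeval_algHom_apply
        (σ : AlgebraicClosure K →ₐ[K] AlgebraicClosure K) x f
    ext y
    constructor
    · rintro ⟨x, ⟨hx0, hxmem⟩, rfl⟩
      refine ⟨by rw [key, hx0, map_zero], ?_⟩
      rw [← hmap]
      exact ⟨x, hxmem, rfl⟩
    · rintro ⟨hy0, hymem⟩
      rw [← hmap] at hymem
      obtain ⟨x, hxmem, rfl⟩ := hymem
      refine ⟨x, ⟨?_, hxmem⟩, rfl⟩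
      have hy0' : aeval (σ x) f = 0 := hy0
      rw [key] at hy0'
      exact σ.injective (by simpa using hy0')
  calc {x : AlgebraicClosure K | aeval x f = 0 ∧ x ∈ K⟮α⟯}.ncard
      = ((σ : AlgebraicClosure K → AlgebraicClosure K) ''
          {x : AlgebraicClosure K | aeval x f = 0 ∧ x ∈ K⟮α⟯}).ncard :=
        (Set.ncard_image_of_injective _ σ.injective).symm
    _ = _ := by rw [himg]
end

section
/- Let K be a field of characteristic 0 with a fixed algebraic closure K̄, and let f ∈ K[x] be an irreducible polynomial of degree n. Then the root cluster size r_K(f) (the number of roots of f lying in K(α) for a root α of f) divides n. (Perlis, Theorem 2.1(ii).) -/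
open Polynomial IntermediateField

set_option synthInstance.maxHeartbeats 1000000 in
set_option maxHeartbeats 1000000 in
/-- Perlis, Theorem 2.1(ii): the root cluster size of an irreducible polynomial `f` over a
field `K` of characteristic zero divides the degree of `f`. -/
theorem cluster_size_dvd_degree {K : Type*} [Field K] [CharZero K]
    (f : K[X]) (hf : Irreducible f)
    (α : AlgebraicClosure K) (hα : aeval α f = 0) :
    {x : AlgebraicClosure K | aeval x f = 0 ∧ x ∈ K⟮α⟯}.ncard ∣ f.natDegree := by
  classical
  have hint : IsIntegral K α := Algebra.IsIntegral.isIntegral α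
  set E := K⟮α⟯
  haveI : FiniteDimensional K E := adjoin.finiteDimensional hint
  have hlc : f.leadingCoeff ≠ 0 := hf.ne_zero ∘ leadingCoeff_eq_zero.mp
  have hmin : minpoly K α = f * C f.leadingCoeff⁻¹ := (minpoly.eq_of_irreducible hf hα).symm
  have hmin0 : minpoly K α ≠ 0 := minpoly.ne_zero hint
  -- roots of f coincide with roots of the minimal polynomial
  have hroot : ∀ x : AlgebraicClosure K, aeval x f = 0 ↔ aeval x (minpoly K α) = 0 := by
    intro x
    rw [hmin, map_mul, aeval_C, mul_eq_zero]
    constructor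
    · exact fun h => Or.inl h
    · rintro (h | h)
      · exact h
      · exact absurd h ((map_ne_zero_iff _ (algebraMap K _).injective).mpr
          (inv_ne_zero hlc))
  -- the degree of f equals the degree of the minimal polynomial
  have hdeg : (minpoly K α).natDegree = f.natDegree := by
    rw [hmin, natDegree_mul (hf.ne_zero) (by simpa using inv_ne_zero hlc), natDegree_C, add_zero]
  -- set of roots in E is in bijection with roots of minpoly in E
  have e1 : {x : AlgebraicClosure K | aeval x f = 0 ∧ x ∈ E} ≃
      { y : E // y ∈ (minpoly K α).aroots E } := by
    refine ⟨fun x => ⟨⟨x.1, x.2.2⟩, ?_⟩, fun y => ⟨(y.1 : AlgebraicClosure K), ?_, y.1.2⟩,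
      fun x => rfl, fun y => rfl⟩
    · rw [mem_aroots]
      refine ⟨hmin0, ?_⟩
      have := (hroot x.1).mp x.2.1
      apply_fun (algebraMap E (AlgebraicClosure K)) using (algebraMap E _).injective
      rw [map_zero, ← aeval_algebraMap_apply]
      exact this
    · rw [hroot]
      have h := (mem_aroots.mp y.2).2
      have := congrArg (algebraMap E (AlgebraicClosure K)) h
      rwa [map_zero, ← aeval_algebraMap_apply] at this
  -- roots of minpoly in E biject with K-algebra homs E → E
  have e2 : (E →ₐ[K] E) ≃ { y : E // y ∈ (minpoly K α).aroots E } :=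
    algHomAdjoinIntegralEquiv K hint
  -- algebra homs biject with algebra equivs
  have e3 : (E ≃ₐ[K] E) ≃ (E →ₐ[K] E) := algEquivEquivAlgHom K E
  have hcard : {x : AlgebraicClosure K | aeval x f = 0 ∧ x ∈ E}.ncard =
      Fintype.card (E ≃ₐ[K] E) := by
    rw [← Nat.card_coe_set_eq, Nat.card_congr (e1.trans (e2.symm.trans e3.symm)),
      Nat.card_eq_fintype_card]
  rw [hcard, ← hdeg, ← IntermediateField.adjoin.finrank hint]
  -- card of automorphism group divides finrank via the fixed field
  set F : IntermediateField K E := IntermediateField.fixedField (⊤ : Subgroup (E ≃ₐ[K] E)) with hF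
  have hcard2 : Module.finrank (↥F) (↥E) = Fintype.card (E ≃ₐ[K] E) := by
    rw [hF, IntermediateField.finrank_fixedField_eq_card,
      Nat.card_congr Subgroup.topEquiv.toEquiv, Nat.card_eq_fintype_card]
  rw [← hcard2]
  exact Dvd.intro_left _ (Module.finrank_mul_finrank K (↥F) (↥E))
end

section
/- Let K be a field of characteristic 0 with a fixed algebraic closure K̄, and let f ∈ K[x] be an irreducible polynomial of degree n. Let r_K(f) be the root cluster size of f and let s_K(f) be the number of distinct fields among the subfields K(α′) of K̄ as α′ ranges over the n roots of f. Then r_K(f) · s_K(f) = n. (Perlis, Theorem 2.1(iii).) -/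
open Polynomial IntermediateField

/-- Perlis, Theorem 2.1(iii): for an irreducible polynomial `f` of degree `n` over a field `K`
of characteristic zero, the root cluster size `r_K(f)` times the number `s_K(f)` of distinct
fields `K(α')`, as `α'` runs over the roots of `f`, equals `n`. -/
theorem cluster_size_mul_num_fields_eq_degree {K : Type*} [Field K] [CharZero K]
    (f : K[X]) (hf : Irreducible f)
    (α : AlgebraicClosure K) (hα : aeval α f = 0) :
    {x : AlgebraicClosure K | aeval x f = 0 ∧ x ∈ K⟮α⟯}.ncard *
      ((fun β : AlgebraicClosure K => K⟮β⟯) '' {β | aeval β f = 0}).ncard =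
      f.natDegree := by
  classical
  have hf0 : f ≠ 0 := hf.ne_zero
  -- minimal polynomial of any root
  have hmin : ∀ β : (AlgebraicClosure K), aeval β f = 0 → minpoly K β = f * C f.leadingCoeff⁻¹ :=
    fun β hβ => (minpoly.eq_of_irreducible hf hβ).symm
  have hint : ∀ β : (AlgebraicClosure K), aeval β f = 0 → IsIntegral K β := by
    intro β hβ
    exact IsAlgebraic.isIntegral ⟨f, hf0, hβ⟩
  have hdeg : ∀ β : (AlgebraicClosure K), aeval β f = 0 → (minpoly K β).natDegree = f.natDegree := by
    intro β hβ
    rw [hmin β hβ, natDegree_mul hf0 (by simp [leadingCoeff_ne_zero.mpr hf0])]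
    simp
  -- the finset of roots
  set R : Finset (AlgebraicClosure K) := (f.aroots (AlgebraicClosure K)).toFinset with hRdef
  have hmemR : ∀ x : (AlgebraicClosure K), x ∈ R ↔ aeval x f = 0 := by
    intro x
    simp [hRdef, Polynomial.mem_aroots, hf0]
  -- cardinality of the roots
  have hsep : f.Separable := hf.separable
  have hcardR : R.card = f.natDegree := by
    rw [hRdef, aroots_def, Multiset.toFinset_card_of_nodup (nodup_roots hsep.map),
      ← (IsAlgClosed.splits (f.map (algebraMap K (AlgebraicClosure K)))).natDegree_eq_card_roots,
      natDegree_map]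
  -- fibers of `β ↦ K⟮β⟯` are root clusters
  have hfiber : ∀ x β : (AlgebraicClosure K), aeval x f = 0 → aeval β f = 0 →
      (K⟮x⟯ = K⟮β⟯ ↔ x ∈ K⟮β⟯) := by
    intro x β hx hβ
    constructor
    · intro h
      rw [← h]
      exact mem_adjoin_simple_self K x
    · intro h
      have : FiniteDimensional K K⟮β⟯ :=
        IntermediateField.adjoin.finiteDimensional (hint β hβ)
      refine IntermediateField.eq_of_le_of_finrank_eq (adjoin_simple_le_iff.mpr h) ?_
      rw [IntermediateField.adjoin.finrank (hint x hx),
        IntermediateField.adjoin.finrank (hint β hβ), hdeg x hx, hdeg β hβ]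
  -- all root clusters have the same size
  have hsame : ∀ β : (AlgebraicClosure K), aeval β f = 0 →
      (R.filter (· ∈ K⟮β⟯)).card = (R.filter (· ∈ K⟮α⟯)).card := by
    intro β hβ
    -- an automorphism sending α to β
    obtain ⟨σ, hσ⟩ : ∃ σ : (AlgebraicClosure K) ≃ₐ[K] (AlgebraicClosure K), σ α = β := by
      apply minpoly.exists_algEquiv_of_root (hint β hβ).isAlgebraic
      rw [hmin β hβ, map_mul, hα, zero_mul]
    have hmap : ∀ x : (AlgebraicClosure K), x ∈ K⟮α⟯ → σ x ∈ K⟮β⟯ := by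
      intro x hx
      have : K⟮α⟯.map (σ : (AlgebraicClosure K) →ₐ[K] (AlgebraicClosure K)) = K⟮β⟯ := by
        rw [← hσ]
        have := IntermediateField.adjoin_map K ({α} : Set (AlgebraicClosure K)) (σ : (AlgebraicClosure K) →ₐ[K] (AlgebraicClosure K))
        rw [this, Set.image_singleton]
        rfl
      rw [← this]
      exact ⟨x, hx, rfl⟩
    symm
    refine Finset.card_bij (fun x _ => σ x) ?_ ?_ ?_
    · intro x hx
      rw [Finset.mem_filter] at hx ⊢
      refine ⟨(hmemR _).mpr ?_, hmap x hx.2⟩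
      have := (hmemR x).mp hx.1
      have : aeval (σ x) f = σ (aeval x f) := by
        rw [aeval_algEquiv]
        simp
      rw [this, (hmemR x).mp hx.1, map_zero]
    · intro x hx y hy h
      exact σ.injective h
    · intro y hy
      rw [Finset.mem_filter] at hy
      refine ⟨σ.symm y, ?_, by simp⟩
      rw [Finset.mem_filter]
      constructor
      · rw [hmemR]
        have : aeval (σ.symm y) f = σ.symm (aeval y f) := by
          rw [aeval_algEquiv]
          simp
        rw [this, (hmemR y).mp hy.1, map_zero]
      · have hmap' : ∀ x : (AlgebraicClosure K), x ∈ K⟮β⟯ → σ.symm x ∈ K⟮α⟯ := by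
          intro x hx
          have : K⟮β⟯.map (σ.symm : (AlgebraicClosure K) →ₐ[K] (AlgebraicClosure K)) = K⟮α⟯ := by
            rw [← hσ]
            have := IntermediateField.adjoin_map K ({σ α} : Set (AlgebraicClosure K)) (σ.symm : (AlgebraicClosure K) →ₐ[K] (AlgebraicClosure K))
            rw [this, Set.image_singleton]
            simp
          rw [← this]
          exact ⟨x, hx, rfl⟩
        exact hmap' y hy.2
  -- now count
  set φ : (AlgebraicClosure K) → IntermediateField K (AlgebraicClosure K) := fun β => K⟮β⟯ with hφ
  have hcount : R.card = ∑ L ∈ R.image φ, (R.filter (fun x => φ x = L)).card :=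
    Finset.card_eq_sum_card_fiberwise (fun x hx => Finset.mem_image_of_mem φ hx)
  have hconst : ∀ L ∈ R.image φ,
      (R.filter (fun x => φ x = L)).card = (R.filter (· ∈ K⟮α⟯)).card := by
    intro L hL
    obtain ⟨β, hβR, rfl⟩ := Finset.mem_image.mp hL
    have hβ : aeval β f = 0 := (hmemR β).mp hβR
    rw [← hsame β hβ]
    congr 1
    apply Finset.filter_congr
    intro x hx
    simpa using hfiber x β ((hmemR x).mp hx) hβ
  have hsum : R.card = (R.image φ).card * (R.filter (· ∈ K⟮α⟯)).card := by
    rw [hcount, Finset.sum_congr rfl hconst, Finset.sum_const, smul_eq_mul]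
  -- translate the statement's sets into the finsets above
  have hset1 : {x : (AlgebraicClosure K) | aeval x f = 0 ∧ x ∈ K⟮α⟯} = ↑(R.filter (· ∈ K⟮α⟯)) := by
    ext x
    simp [hmemR x]
  have hset2 : (φ '' {β : (AlgebraicClosure K) | aeval β f = 0}) = ↑(R.image φ) := by
    have : {β : (AlgebraicClosure K) | aeval β f = 0} = ↑R := by
      ext x
      simp [hmemR x]
    rw [this, Finset.coe_image]
  rw [hset1, hset2, Set.ncard_coe_finset, Set.ncard_coe_finset, Nat.mul_comm, ← hsum, hcardR]
end

section
/- Let K be a field of characteristic 0, f ∈ K[x] an irreducible polynomial with splitting field K_f (inside a fixed algebraic closure K̄), G = Gal(K_f/K), α a root of f, and H ≤ G the subgroup of elements fixing K(α) pointwise. Then the root cluster size r_K(f) equals the index [N_G(H) : H] of H in its normalizer N_G(H) in G. (Perlis, Theorem 2.1(iv).) -/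
open Polynomial IntermediateField

/-- Perlis, Theorem 2.1(iv): the root cluster size of an irreducible polynomial `f` over a
field `K` of characteristic zero equals the index `[N_G(H) : H]` where `G = Gal(K_f/K)` is the
Galois group of the splitting field `K_f` of `f` and `H` is the subgroup fixing `K(α)`
pointwise, for a root `α` of `f`. -/
theorem cluster_size_eq_index_normalizer {K : Type*} [Field K] [CharZero K]
    (f : K[X]) (hf : Irreducible f)
    (α : AlgebraicClosure K) (hα : aeval α f = 0)
    (Kf : IntermediateField K (AlgebraicClosure K))
    (hKf : Kf = IntermediateField.adjoin K (f.rootSet (AlgebraicClosure K)))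
    (α' : Kf) (hα' : (α' : AlgebraicClosure K) = α)
    (H : Subgroup (Kf ≃ₐ[K] Kf))
    (hH : H = (IntermediateField.adjoin K {α'}).fixingSubgroup) :
    {x : AlgebraicClosure K | aeval x f = 0 ∧ x ∈ K⟮α⟯}.ncard =
      H.relIndex (Subgroup.normalizer (H : Set (Kf ≃ₐ[K] Kf))) := by
  classical
  have hf0 : f ≠ 0 := hf.ne_zero
  have hsep : f.Separable := hf.separable
  have hsplits : (f.map (algebraMap K (AlgebraicClosure K))).Splits := IsAlgClosed.splits _
  have hSF : f.IsSplittingField K Kf := by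
    rw [hKf]; exact adjoin_rootSet_isSplittingField hsplits
  haveI : f.IsSplittingField K Kf := hSF
  haveI : FiniteDimensional K Kf := Polynomial.IsSplittingField.finiteDimensional Kf f
  haveI : IsGalois K Kf := IsGalois.of_separable_splitting_field hsep
  -- α' is a root of f
  have hroot' : aeval α' f = 0 := by
    have h1 : (algebraMap Kf (AlgebraicClosure K)) (aeval α' f) = 0 := by
      rw [← Polynomial.aeval_algebraMap_apply, IntermediateField.algebraMap_apply, hα', hα]
    exact (map_eq_zero_iff _ (algebraMap Kf (AlgebraicClosure K)).injective).mp h1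
  -- minimal polynomial of α'
  have hmin : minpoly K α' = f * C f.leadingCoeff⁻¹ := (minpoly.eq_of_irreducible hf hroot').symm
  have hminroot : ∀ y : Kf, aeval y f = 0 → aeval y (minpoly K α') = 0 := by
    intro y hy
    rw [hmin, map_mul, hy, zero_mul]
  -- stabilizer characterization
  have hstab : ∀ σ : Kf ≃ₐ[K] Kf, σ ∈ H ↔ σ α' = α' := by
    intro σ
    constructor
    · intro hσ
      rw [hH] at hσ
      exact (IntermediateField.mem_fixingSubgroup_iff _ σ).mp hσ α'
        (IntermediateField.mem_adjoin_simple_self K α')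
    · intro hσ
      have hle : IntermediateField.adjoin K {α'} ≤
          IntermediateField.fixedField (Subgroup.zpowers σ) := by
        rw [IntermediateField.adjoin_le_iff, Set.singleton_subset_iff]
        intro g
        exact (Subgroup.zpowers_le.mpr
          (show σ ∈ MulAction.stabilizer (Kf ≃ₐ[K] Kf) α' from hσ)) g.2
      rw [hH]
      exact (IntermediateField.le_iff_le _ _).mp hle (Subgroup.mem_zpowers σ)
  -- K⟮α'⟯ is the fixed field of H
  have hKα' : IntermediateField.fixedField H = IntermediateField.adjoin K {α'} := by
    rw [hH]; exact IsGalois.fixedField_fixingSubgroup _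
  -- membership transfer between K̄ and Kf
  have hmem : ∀ x : Kf, (x : AlgebraicClosure K) ∈ K⟮α⟯ ↔
      x ∈ IntermediateField.adjoin K {α'} := by
    intro x
    have hmap : (IntermediateField.adjoin K {α'}).map Kf.val = K⟮α⟯ := by
      rw [IntermediateField.adjoin_map, Set.image_singleton]
      congr 1
      rw [Set.singleton_eq_singleton_iff]
      exact hα'
    rw [← hmap, ← SetLike.mem_coe, IntermediateField.coe_map, Set.mem_image]
    constructor
    · rintro ⟨y, hy, hyx⟩
      have : y = x := Subtype.ext hyx
      rwa [← this]
    · intro hx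
      exact ⟨x, hx, rfl⟩
  have haut : ∀ σ : Kf ≃ₐ[K] Kf, σ⁻¹ = σ.symm := fun _ => rfl
  -- conjugation characterization
  have hconj : ∀ σ n : Kf ≃ₐ[K] Kf, n (σ α') = σ α' ↔ σ⁻¹ * n * σ ∈ H := by
    intro σ n
    rw [hstab]
    rw [AlgEquiv.mul_apply, AlgEquiv.mul_apply, haut]
    constructor
    · intro h; rw [h, AlgEquiv.symm_apply_apply]
    · intro h
      have := congrArg σ h
      rwa [AlgEquiv.apply_symm_apply] at this
  -- normalizer characterization
  have hnorm : ∀ σ : Kf ≃ₐ[K] Kf,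
      σ α' ∈ IntermediateField.adjoin K {α'} ↔ σ ∈ Subgroup.normalizer (H : Set (Kf ≃ₐ[K] Kf)) := by
    intro σ
    constructor
    · intro hσ
      rw [← hKα'] at hσ
      have key : ∀ n, n ∈ (H : Set (Kf ≃ₐ[K] Kf)) → σ⁻¹ * n * σ⁻¹⁻¹ ∈ (H : Set (Kf ≃ₐ[K] Kf)) := by
        intro n hn
        have hfix : n (σ α') = σ α' := hσ ⟨n, hn⟩
        rw [inv_inv]
        exact (hconj σ n).mp hfix
      have h1 : σ⁻¹ ∈ Subgroup.normalizer (H : Set (Kf ≃ₐ[K] Kf)) := by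
        rw [Subgroup.mem_normalizer_iff]
        exact Subgroup.mem_normalizer_fintype key
      exact ((Subgroup.normalizer (H : Set (Kf ≃ₐ[K] Kf))).inv_mem_iff).mp h1
    · intro hσ
      rw [← hKα']
      rintro ⟨n, hn⟩
      show n • (σ α') = σ α'
      rw [AlgEquiv.smul_def]
      exact (hconj σ n).mpr (((Subgroup.mem_normalizer_iff'').mp hσ n).mp hn)
  -- now build the bijection
  set S := {x : AlgebraicClosure K | aeval x f = 0 ∧ x ∈ K⟮α⟯} with hS
  set N := Subgroup.normalizer (H : Set (Kf ≃ₐ[K] Kf)) with hN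
  -- the map from N to S
  have hval : ∀ σ : Kf ≃ₐ[K] Kf, aeval (σ α') f = 0 := by
    intro σ
    rw [show σ α' = σ.toAlgHom α' from rfl, Polynomial.aeval_algHom_apply, hroot', map_zero]
  have hmapS : ∀ σ : N, ((((σ : Kf ≃ₐ[K] Kf) α' : Kf)) : AlgebraicClosure K) ∈ S := by
    intro σ
    constructor
    · have h1 := hval (σ : Kf ≃ₐ[K] Kf)
      have h2 : (algebraMap Kf (AlgebraicClosure K)) (aeval ((σ : Kf ≃ₐ[K] Kf) α') f) = 0 := by
        rw [h1, map_zero]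
      rw [← Polynomial.aeval_algebraMap_apply, IntermediateField.algebraMap_apply] at h2
      exact h2
    · exact (hmem _).mpr ((hnorm _).mpr σ.2)
  let φ : N → S := fun σ => ⟨_, hmapS σ⟩
  have hφresp : ∀ σ τ : N, σ⁻¹ * τ ∈ H.subgroupOf N → φ σ = φ τ := by
    intro σ τ h
    have h' : ((σ : Kf ≃ₐ[K] Kf))⁻¹ * (τ : Kf ≃ₐ[K] Kf) ∈ H := h
    have := (hstab _).mp h'
    rw [AlgEquiv.mul_apply, haut] at this
    have h2 := congrArg (σ : Kf ≃ₐ[K] Kf) this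
    rw [AlgEquiv.apply_symm_apply] at h2
    apply Subtype.ext
    show (((σ : Kf ≃ₐ[K] Kf) α' : Kf) : AlgebraicClosure K)
        = (((τ : Kf ≃ₐ[K] Kf) α' : Kf) : AlgebraicClosure K)
    exact congrArg Subtype.val h2.symm
  let ψ : N ⧸ H.subgroupOf N → S :=
    Quotient.lift φ (fun σ τ h => hφresp σ τ ((QuotientGroup.leftRel_apply).mp h))
  have hψinj : Function.Injective ψ := by
    intro q1 q2
    induction q1 using Quotient.inductionOn with
    | h σ =>
    induction q2 using Quotient.inductionOn with
    | h τ =>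
    intro h
    have h' : φ σ = φ τ := h
    have h1 : (((σ : Kf ≃ₐ[K] Kf) α' : Kf) : AlgebraicClosure K)
        = (((τ : Kf ≃ₐ[K] Kf) α' : Kf) : AlgebraicClosure K) :=
      congrArg (fun s : S => (s : AlgebraicClosure K)) h'
    have h2 : (σ : Kf ≃ₐ[K] Kf) α' = (τ : Kf ≃ₐ[K] Kf) α' := Subtype.ext h1
    have hm : σ⁻¹ * τ ∈ H.subgroupOf N := by
      rw [Subgroup.mem_subgroupOf]
      show ((σ : Kf ≃ₐ[K] Kf))⁻¹ * (τ : Kf ≃ₐ[K] Kf) ∈ H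
      rw [hstab, AlgEquiv.mul_apply, haut, ← h2, AlgEquiv.symm_apply_apply]
    exact Quotient.sound ((QuotientGroup.leftRel_apply).mpr hm)
  have hψsurj : Function.Surjective ψ := by
    rintro ⟨x, hx1, hx2⟩
    -- x lies in Kf
    have hxKf : x ∈ Kf := by
      rw [hKf]
      exact IntermediateField.subset_adjoin K _ ((Polynomial.mem_rootSet).mpr ⟨hf0, hx1⟩)
    set x' : Kf := ⟨x, hxKf⟩ with hx'
    have hx'root : aeval x' f = 0 := by
      have h1 : (algebraMap Kf (AlgebraicClosure K)) (aeval x' f) = 0 := by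
        rw [← Polynomial.aeval_algebraMap_apply, IntermediateField.algebraMap_apply]; exact hx1
      exact (map_eq_zero_iff _ (algebraMap Kf (AlgebraicClosure K)).injective).mp h1
    have halg : IsAlgebraic K α' := (IsIntegral.of_finite K α').isAlgebraic
    obtain ⟨σ, hσ⟩ := minpoly.exists_algEquiv_of_root' halg (hminroot x' hx'root)
    have hσN : σ ∈ N := by
      rw [← hnorm, hσ]
      exact (hmem x').mp hx2
    refine ⟨Quotient.mk _ (⟨σ, hσN⟩ : N), ?_⟩
    show φ ⟨σ, hσN⟩ = _
    apply Subtype.ext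
    show ((σ α' : Kf) : AlgebraicClosure K) = x
    rw [hσ]
  -- conclude
  have hcard : Nat.card S = Nat.card (N ⧸ H.subgroupOf N) :=
    Nat.card_congr (Equiv.ofBijective ψ ⟨hψinj, hψsurj⟩).symm
  rw [← Nat.card_coe_set_eq, hcard, Subgroup.relIndex, Subgroup.index_eq_card]
end

section
/- Let K be a field of characteristic 0 with a fixed algebraic closure K̄, and let L be a finite extension of K inside K̄. If α and β are two primitive elements of L over K (i.e., K(α) = K(β) = L), then the root cluster size of the minimal polynomial of α over K equals the root cluster size of the minimal polynomial of β over K. (Corollary 2.2: the cluster size depends only on the extension L/K.) -/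
open Polynomial IntermediateField

lemma cluster_aux {K : Type*} [Field K] [CharZero K]
    (L : IntermediateField K (AlgebraicClosure K)) [FiniteDimensional K L]
    (α : AlgebraicClosure K) (hα : K⟮α⟯ = L) :
    {x : AlgebraicClosure K | aeval x (minpoly K α) = 0 ∧ x ∈ K⟮α⟯}.ncard =
      Nat.card (↥L →ₐ[K] ↥L) := by
  have hmem : α ∈ L := hα ▸ mem_adjoin_simple_self K α
  have hint : IsIntegral K α := by
    have h1 : IsIntegral K (⟨α, hmem⟩ : L) := IsIntegral.of_finite K _
    simpa using h1.map L.val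
  have hne : minpoly K α ≠ 0 := minpoly.ne_zero hint
  -- bijection between roots in L and alg homs
  have e1 : (K⟮α⟯ →ₐ[K] ↥L) ≃ { x : ↥L // x ∈ (minpoly K α).aroots ↥L } :=
    algHomAdjoinIntegralEquiv K hint
  have e3 : (↥L →ₐ[K] ↥L) ≃ (K⟮α⟯ →ₐ[K] ↥L) :=
    AlgEquiv.arrowCongr (equivOfEq hα).symm AlgEquiv.refl
  have e2 : { x : ↥L // x ∈ (minpoly K α).aroots ↥L } ≃
      {x : AlgebraicClosure K | aeval x (minpoly K α) = 0 ∧ x ∈ K⟮α⟯} := by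
    refine Equiv.ofBijective (fun x => ⟨(x : ↥L), ?_, ?_⟩) ⟨?_, ?_⟩
    · have hx : aeval (x : ↥L) (minpoly K α) = 0 := (mem_aroots.mp x.2).2
      show aeval (L.val (x : ↥L)) (minpoly K α) = 0
      rw [aeval_algHom_apply, hx, map_zero]
    · rw [hα]; exact (x : ↥L).2
    · intro a b hab
      simp only [Subtype.mk.injEq] at hab
      exact Subtype.ext (Subtype.ext hab)
    · rintro ⟨y, hy1, hy2⟩
      rw [hα] at hy2
      refine ⟨⟨⟨y, hy2⟩, ?_⟩, rfl⟩
      rw [mem_aroots]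
      refine ⟨hne, ?_⟩
      have h0 : L.val (aeval (⟨y, hy2⟩ : L) (minpoly K α)) = 0 := by
        rw [← aeval_algHom_apply]; exact hy1
      exact (map_eq_zero_iff _ L.val.injective).mp h0
  rw [← Nat.card_coe_set_eq]
  exact (Nat.card_congr ((e3.trans e1).trans e2)).symm

/-- Corollary 2.2: the root cluster size depends only on the extension `L/K`: any two
primitive elements of a finite extension `L` of `K` (inside a fixed algebraic closure) have
minimal polynomials with equal root cluster sizes. -/
theorem cluster_size_depends_only_on_extension {K : Type*} [Field K] [CharZero K]
    (L : IntermediateField K (AlgebraicClosure K)) [FiniteDimensional K L]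
    (α β : AlgebraicClosure K)
    (hα : K⟮α⟯ = L) (hβ : K⟮β⟯ = L) :
    {x : AlgebraicClosure K | aeval x (minpoly K α) = 0 ∧ x ∈ K⟮α⟯}.ncard =
      {x : AlgebraicClosure K | aeval x (minpoly K β) = 0 ∧ x ∈ K⟮β⟯}.ncard := by
  rw [cluster_aux L α hα, cluster_aux L β hβ]
end

section
/- For every integer n ≥ 4, any subgroup H of the alternating group A_n of index n is a maximal subgroup of A_n and is isomorphic to the alternating group A_{n-1}. (Proposition 2.3.) -/
open Equiv Equiv.Perm Subgroup
open scoped Nat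

section Helpers

variable {G : Type*} [Group G]

/-- If `H ≤ K` and they have the same finite index, they are equal. -/
lemma my_eq_of_le_of_index_eq {H K : Subgroup G} (h : H ≤ K) (hne : K.index ≠ 0)
    (he : H.index = K.index) : H = K := by
  have h1 := Subgroup.relIndex_mul_index h
  rw [he] at h1
  have : H.relIndex K = 1 := by
    nlinarith [Nat.pos_of_ne_zero hne, Nat.one_le_iff_ne_zero.mpr hne]
  exact le_antisymm h (Subgroup.relIndex_eq_one.mp this)

variable {α : Type*} [Fintype α] [DecidableEq α]

/-- A subgroup of the alternating group containing all 3-cycles is the whole group. -/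
lemma my_top_of_threeCycles (K : Subgroup (alternatingGroup α))
    (h : ∀ (f : Perm α) (hf : f.IsThreeCycle),
      (⟨f, hf.mem_alternatingGroup⟩ : alternatingGroup α) ∈ K) : K = ⊤ := by
  apply Subgroup.map_injective (alternatingGroup α).subtype_injective
  have h1 : K.map (alternatingGroup α).subtype = alternatingGroup α := by
    apply le_antisymm
    · have := Subgroup.map_le_range (alternatingGroup α).subtype K
      rwa [Subgroup.range_subtype] at this
    · intro f hf
      rw [← closure_three_cycles_eq_alternating] at hf
      refine Subgroup.closure_induction ?_ ?_ ?_ ?_ hf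
      · intro g hg
        exact ⟨⟨g, hg.mem_alternatingGroup⟩, h g hg, rfl⟩
      · exact ⟨1, one_mem K, rfl⟩
      · rintro a b - - ⟨u, hu, rfl⟩ ⟨v, hv, rfl⟩
        exact ⟨u * v, mul_mem hu hv, rfl⟩
      · rintro a - ⟨u, hu, rfl⟩
        exact ⟨u⁻¹, inv_mem hu, rfl⟩
  rw [h1]
  have h2 : (⊤ : Subgroup (alternatingGroup α)).map (alternatingGroup α).subtype
      = alternatingGroup α := by
    rw [← MonoidHom.range_eq_map, Subgroup.range_subtype]
  rw [h2]

/-- Permutation groups of equivalent types are isomorphic. -/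
noncomputable def permCongrMulEquiv {β : Type*} (e : α ≃ β) : Perm α ≃* Perm β :=
  { e.permCongr with
    map_mul' := fun f g => by
      ext b
      simp [Equiv.permCongr_apply] }

/-- Alternating groups of equivalent finite types are isomorphic. -/
noncomputable def alternatingCongr {β : Type*} [Fintype β] [DecidableEq β] (e : α ≃ β) :
    alternatingGroup α ≃* alternatingGroup β := by
  refine ((permCongrMulEquiv e).subgroupMap (alternatingGroup α)).trans
    (MulEquiv.subgroupCongr ?_)
  ext σ
  simp only [Subgroup.mem_map, Equiv.Perm.mem_alternatingGroup]
  constructor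
  · rintro ⟨f, hf, rfl⟩
    simpa [permCongrMulEquiv] using hf
  · intro hσ
    refine ⟨(permCongrMulEquiv e).symm σ, ?_, by simp⟩
    have : (permCongrMulEquiv e).symm σ = e.symm.permCongr σ := rfl
    rw [this, sign_permCongr]
    exact hσ

/-- The natural homomorphism from the alternating group on a subtype. -/
noncomputable def altOfSubtypeHom (p : α → Prop) [DecidablePred p] :
    alternatingGroup {x // p x} →* alternatingGroup α where
  toFun f := ⟨Equiv.Perm.ofSubtype f.1, by
    rw [Equiv.Perm.mem_alternatingGroup, sign_ofSubtype]
    exact Equiv.Perm.mem_alternatingGroup.mp f.2⟩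
  map_one' := Subtype.ext (map_one Equiv.Perm.ofSubtype)
  map_mul' f g := Subtype.ext (map_mul Equiv.Perm.ofSubtype _ _)

lemma my_mem_iff_of_support_le {s : Finset α} {f : Perm α} (h : f.support ⊆ s) (x : α) :
    x ∈ s ↔ f x ∈ s := by
  constructor
  · intro hx
    by_cases hfx : f x = x
    · rwa [hfx]
    · exact h ((Equiv.Perm.apply_mem_support).mpr (by rwa [Equiv.Perm.mem_support]))
  · intro hx
    by_cases hfx : f x = x
    · rwa [← hfx]
    · exact h (by rwa [Equiv.Perm.mem_support])

end Helpers

/-- `Fintype.card` does not depend on the instance. -/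
lemma my_card_indep {β : Type*} (I1 I2 : Fintype β) :
    @Fintype.card β I1 = @Fintype.card β I2 := by
  rw [Subsingleton.elim I1 I2]
section Stab

variable {α : Type*} [Fintype α] [DecidableEq α]

/-- The hom from the alternating group on `{x // x ≠ a}` to the even permutations fixing `a`. -/
noncomputable def altStabHom (a : α) :
    alternatingGroup {x // x ≠ a} →*
      (alternatingGroup α ⊓ MulAction.stabilizer (Perm α) a : Subgroup (Perm α)) where
  toFun f := ⟨Equiv.Perm.ofSubtype f.1, Subgroup.mem_inf.mpr ⟨by
      rw [Equiv.Perm.mem_alternatingGroup, sign_ofSubtype]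
      exact Equiv.Perm.mem_alternatingGroup.mp f.2, by
      rw [MulAction.mem_stabilizer_iff]
      exact Equiv.Perm.ofSubtype_apply_of_not_mem f.1 (by simp)⟩⟩
  map_one' := Subtype.ext (map_one Equiv.Perm.ofSubtype)
  map_mul' f g := Subtype.ext (map_mul Equiv.Perm.ofSubtype _ _)

lemma altStabHom_bijective (a : α) : Function.Bijective (altStabHom a) := by
  constructor
  · intro f g hfg
    have h1 : Equiv.Perm.ofSubtype f.1 = Equiv.Perm.ofSubtype g.1 :=
      congrArg Subtype.val hfg
    have h2 := Equiv.Perm.subtypePerm_ofSubtype f.1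
    have h3 := Equiv.Perm.subtypePerm_ofSubtype g.1
    apply Subtype.ext
    rw [← h2, ← h3]
    congr 1
  · rintro ⟨s, hs⟩
    rw [Subgroup.mem_inf] at hs
    obtain ⟨hs1, hs2⟩ := hs
    rw [MulAction.mem_stabilizer_iff] at hs2
    have hs2' : s a = a := hs2
    have hmem : ∀ x, s x ≠ a ↔ x ≠ a := by
      intro x
      constructor
      · intro hx h
        exact hx (by rw [h, hs2'])
      · intro hx h
        exact hx (s.injective (by rw [h, hs2']))
    have hsign : Equiv.Perm.sign (s.subtypePerm (p := fun x => x ≠ a) hmem) = 1 := by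
      rw [Equiv.Perm.sign_subtypePerm s (p := fun x => x ≠ a) hmem]
      · exact Equiv.Perm.mem_alternatingGroup.mp hs1
      · intro x hx h
        exact hx (by rw [h, hs2'])
    refine ⟨⟨s.subtypePerm (p := fun x => x ≠ a) hmem, Equiv.Perm.mem_alternatingGroup.mpr hsign⟩, ?_⟩
    apply Subtype.ext
    show Equiv.Perm.ofSubtype (s.subtypePerm (p := fun x => x ≠ a) hmem) = s
    apply Equiv.Perm.ofSubtype_subtypePerm
    intro x hx h
    rw [h, hs2'] at hx
    exact hx rfl

/-- The alternating group on `{x // x ≠ a}` is isomorphic to the even permutations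
fixing `a`. -/
noncomputable def altStabEquiv (a : α) :
    alternatingGroup {x // x ≠ a} ≃*
      (alternatingGroup α ⊓ MulAction.stabilizer (Perm α) a : Subgroup (Perm α)) :=
  MulEquiv.ofBijective (altStabHom a) (altStabHom_bijective a)

end Stab

section Simple

variable {α : Type*} [Fintype α] [DecidableEq α]

/-- Key step: a normal subgroup of the alternating group containing a nontrivial even
permutation supported on a 5-element subtype is everything. -/
theorem my_key (h5 : 5 ≤ Fintype.card α) (N : Subgroup (alternatingGroup α)) (hN : N.Normal)
    (p : α → Prop) [DecidablePred p] (hp : Fintype.card {x // p x} = 5)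
    (r : Perm α) (hsignr : Equiv.Perm.sign r = 1) (hr1 : r ≠ 1)
    (hsuppr : ∀ x, r x ≠ x → p x)
    (hrN : (⟨r, Equiv.Perm.mem_alternatingGroup.mpr hsignr⟩ : alternatingGroup α) ∈ N) :
    N = ⊤ := by
  haveI : Nontrivial {x // p x} := by
    rw [← Fintype.one_lt_card_iff_nontrivial, hp]
    omega
  haveI : Nontrivial (alternatingGroup {x // p x}) :=
    alternatingGroup.nontrivial_of_three_le_card (by rw [Nat.card_eq_fintype_card, hp]; omega)
  haveI hWsimple : IsSimpleGroup (alternatingGroup {x // p x}) := by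
    have e := (Fintype.equivFinOfCardEq hp).symm
    exact IsSimpleGroup.isSimpleGroup_of_surjective (alternatingCongr e).toMonoidHom
      (alternatingCongr e).surjective
  let Ψ : alternatingGroup {x // p x} →* alternatingGroup α := altOfSubtypeHom p
  haveI hKn : (N.comap Ψ).Normal := hN.comap Ψ
  have hmemp : ∀ w, p (r w) ↔ p w := by
    intro w
    by_cases hw : r w = w
    · rw [hw]
    · constructor
      · intro _
        exact hsuppr w hw
      · intro _
        exact hsuppr (r w) (fun h => hw (r.injective h))
  have hofr : Equiv.Perm.ofSubtype (r.subtypePerm hmemp) = r :=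
    Equiv.Perm.ofSubtype_subtypePerm hmemp hsuppr
  have hsignr' : Equiv.Perm.sign (r.subtypePerm hmemp) = 1 := by
    have h4 := sign_ofSubtype (r.subtypePerm hmemp)
    rw [hofr, hsignr] at h4
    exact h4.symm
  have hρK : (⟨r.subtypePerm hmemp, Equiv.Perm.mem_alternatingGroup.mpr hsignr'⟩ :
      alternatingGroup {x // p x}) ∈ N.comap Ψ := by
    rw [Subgroup.mem_comap]
    have heq : Ψ ⟨r.subtypePerm hmemp, Equiv.Perm.mem_alternatingGroup.mpr hsignr'⟩
        = ⟨r, Equiv.Perm.mem_alternatingGroup.mpr hsignr⟩ := Subtype.ext hofr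
    rw [heq]
    exact hrN
  have hKne : N.comap Ψ ≠ ⊥ := by
    intro h
    rw [h, Subgroup.mem_bot] at hρK
    apply hr1
    have h5' : r.subtypePerm hmemp = 1 := congrArg Subtype.val hρK
    have h6 : Equiv.Perm.ofSubtype (r.subtypePerm hmemp)
        = Equiv.Perm.ofSubtype (1 : Perm {x // p x}) := congrArg _ h5'
    rwa [hofr, map_one] at h6
  have hKtop : N.comap Ψ = ⊤ := hKn.eq_bot_or_eq_top.resolve_left hKne
  -- extract a 3-cycle in N
  obtain ⟨a, b, hab⟩ := exists_pair_ne {x // p x}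
  obtain ⟨c, hca, hcb⟩ : ∃ c : {x // p x}, c ≠ a ∧ c ≠ b := by
    by_contra hc
    push_neg at hc
    have hsub : (Finset.univ : Finset {x // p x}) ⊆ {a, b} := by
      intro w _
      simp only [Finset.mem_insert, Finset.mem_singleton]
      by_contra h
      push_neg at h
      exact h.2 (hc w h.1)
    have hc1 := Finset.card_le_card hsub
    simp only [Finset.card_univ, hp] at hc1
    have hc2 : ({a, b} : Finset {x // p x}).card ≤ 2 :=
      (Finset.card_insert_le _ _).trans (by simp)
    omega
  have hc3t : (Equiv.swap a b * Equiv.swap a c).IsThreeCycle :=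
    isThreeCycle_swap_mul_swap_same hab (Ne.symm hca) (Ne.symm hcb)
  have hft : (Equiv.swap (a : α) (b : α) * Equiv.swap (a : α) (c : α)).IsThreeCycle :=
    isThreeCycle_swap_mul_swap_same (Subtype.coe_injective.ne hab)
      (Subtype.coe_injective.ne (Ne.symm hca)) (Subtype.coe_injective.ne (Ne.symm hcb))
  have hfN : (⟨_, hft.mem_alternatingGroup⟩ : alternatingGroup α) ∈ N := by
    have hγ : (⟨_, hc3t.mem_alternatingGroup⟩ : alternatingGroup {x // p x}) ∈ N.comap Ψ := by
      rw [hKtop]; trivial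
    rw [Subgroup.mem_comap] at hγ
    have heq : Ψ ⟨_, hc3t.mem_alternatingGroup⟩
        = (⟨_, hft.mem_alternatingGroup⟩ : alternatingGroup α) := by
      apply Subtype.ext
      show Equiv.Perm.ofSubtype (Equiv.swap a b * Equiv.swap a c) = _
      rw [map_mul, Equiv.Perm.ofSubtype_swap_eq, Equiv.Perm.ofSubtype_swap_eq]
    rwa [heq] at hγ
  rw [eq_top_iff, ← hft.alternating_normalClosure (by rw [Nat.card_eq_fintype_card]; exact h5)]
  apply Subgroup.normalClosure_le_normal
  rw [Set.singleton_subset_iff]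
  exact hfN

/-- The alternating group on a type with at least 5 elements is simple. -/
theorem my_alternating_isSimpleGroup (h5 : 5 ≤ Fintype.card α) :
    IsSimpleGroup (alternatingGroup α) := by
  haveI : Nontrivial (alternatingGroup α) :=
    alternatingGroup.nontrivial_of_three_le_card (by rw [Nat.card_eq_fintype_card]; omega)
  constructor
  intro N hN
  by_cases hb : N = ⊥
  · exact Or.inl hb
  right
  -- obtain a nontrivial element
  have : ∃ x : alternatingGroup α, x ∈ N ∧ x ≠ 1 := by
    by_contra hc
    push_neg at hc
    exact hb ((Subgroup.eq_bot_iff_forall N).mpr hc)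
  obtain ⟨⟨s, hs⟩, hsN, hs1⟩ := this
  have hs1' : s ≠ 1 := fun h => hs1 (Subtype.ext h)
  obtain ⟨x, hx⟩ : ∃ x, s x ≠ x := by
    by_contra hc
    push_neg at hc
    exact hs1' (Equiv.ext hc)
  set y := s x with hy
  have hxy : x ≠ y := fun h => hx h.symm
  -- choose z avoiding x, y, s y, s⁻¹ x
  have hzex : ∃ z, z ∉ ({x, y, s y, s⁻¹ x} : Finset α) := by
    by_contra hc
    push_neg at hc
    have hsub : (Finset.univ : Finset α) ⊆ {x, y, s y, s⁻¹ x} := fun w _ => hc w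
    have hcard := Finset.card_le_card hsub
    simp only [Finset.card_univ] at hcard
    have : ({x, y, s y, s⁻¹ x} : Finset α).card ≤ 4 := by
      apply le_trans (Finset.card_insert_le _ _)
      apply Nat.succ_le_succ
      apply le_trans (Finset.card_insert_le _ _)
      apply Nat.succ_le_succ
      apply le_trans (Finset.card_insert_le _ _)
      apply Nat.succ_le_succ
      simp
    omega
  obtain ⟨z, hz⟩ := hzex
  simp only [Finset.mem_insert, Finset.mem_singleton, not_or] at hz
  have hzx : z ≠ x := hz.1
  have hzy : z ≠ y := hz.2.1
  have hszx : s z ≠ x := by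
    intro h
    exact hz.2.2.2 (by rw [← h]; simp)
  have hxz : x ≠ z := Ne.symm hzx
  have hyz : y ≠ z := Ne.symm hzy
  have hyx : y ≠ x := Ne.symm hxy
  -- the 3-cycle t
  set t : Perm α := Equiv.swap x z * Equiv.swap x y with ht_def
  have ht : t.IsThreeCycle := isThreeCycle_swap_mul_swap_same hxz hxy hzy
  have htx : t x = y := by
    simp only [ht_def, Equiv.Perm.mul_apply, Equiv.swap_apply_left]
    exact Equiv.swap_apply_of_ne_of_ne hyx hyz
  have htz : t z = x := by
    simp only [ht_def, Equiv.Perm.mul_apply]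
    rw [Equiv.swap_apply_of_ne_of_ne hzx hzy, Equiv.swap_apply_right]
  -- the commutator r
  set r : Perm α := t * s * t⁻¹ * s⁻¹ with hr_def
  have hr1 : r ≠ 1 := by
    intro hr
    have h' : t * s * t⁻¹ * s⁻¹ = 1 := by rw [← hr_def]; exact hr
    have hts : t * s = s * t := by
      calc t * s = (t * s * t⁻¹ * s⁻¹) * (s * t) := by group
        _ = s * t := by rw [h', one_mul]
    have heval : t (s z) = s (t z) := by
      have := congrFun (congrArg (fun (u : Perm α) => (u : α → α)) hts) z
      simpa only [Equiv.Perm.mul_apply] using this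
    rw [htz, ← hy] at heval
    have : s z = x := by
      have h2 := congrArg (t⁻¹ : Perm α) heval
      rw [Equiv.Perm.inv_def, Equiv.symm_apply_apply] at h2
      rw [h2, ← htx]
      simp
    exact hszx this
  -- support bound
  set F : Finset α := {x, y, z, s y, s z} with hF_def
  have hxF : x ∈ F := by simp [hF_def]
  have hyF : y ∈ F := by simp [hF_def]
  have hzF : z ∈ F := by simp [hF_def]
  have hsyF : s y ∈ F := by simp [hF_def]
  have hszF : s z ∈ F := by simp [hF_def]
  have hsuppt : t.support ⊆ {x, y, z} := by
    apply le_trans (Equiv.Perm.support_mul_le _ _)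
    intro w hw
    simp only [Finset.sup_eq_union, Finset.mem_union] at hw
    simp only [Finset.mem_insert, Finset.mem_singleton]
    rcases hw with hw | hw
    · have := (Equiv.swap_apply_ne_self_iff.mp (Equiv.Perm.mem_support.mp hw)).2
      tauto
    · have := (Equiv.swap_apply_ne_self_iff.mp (Equiv.Perm.mem_support.mp hw)).2
      tauto
  have hsupp : r.support ⊆ F := by
    have h1 : r = t * (s * t⁻¹ * s⁻¹) := by rw [hr_def]; group
    rw [h1]
    apply le_trans (Equiv.Perm.support_mul_le _ _)
    simp only [Finset.sup_eq_union]
    apply Finset.union_subset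
    · intro w hw
      have := hsuppt hw
      simp only [Finset.mem_insert, Finset.mem_singleton] at this
      rcases this with h | h | h
      · rw [h]; exact hxF
      · rw [h]; exact hyF
      · rw [h]; exact hzF
    · have h3 : (s * t⁻¹ * s⁻¹).support = t⁻¹.support.map s.toEmbedding :=
        Equiv.Perm.support_conj
      rw [h3, Equiv.Perm.support_inv]
      intro w hw
      simp only [Finset.mem_map, Equiv.coe_toEmbedding] at hw
      obtain ⟨v, hv, rfl⟩ := hw
      have := hsuppt hv
      simp only [Finset.mem_insert, Finset.mem_singleton] at this
      rcases this with h | h | h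
      · rw [h, ← hy]; exact hyF
      · rw [h]; exact hsyF
      · rw [h]; exact hszF
  have hFcard : F.card ≤ 5 := by
    rw [hF_def]
    apply le_trans (Finset.card_insert_le _ _)
    apply Nat.succ_le_succ
    apply le_trans (Finset.card_insert_le _ _)
    apply Nat.succ_le_succ
    apply le_trans (Finset.card_insert_le _ _)
    apply Nat.succ_le_succ
    apply le_trans (Finset.card_insert_le _ _)
    apply Nat.succ_le_succ
    simp
  -- enlarge to a 5-element set S
  obtain ⟨S, hFS, -, hScard⟩ := Finset.exists_subsuperset_card_eq (Finset.subset_univ F)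
    hFcard (by simpa using h5)
  -- sign of r
  have hsignr : Equiv.Perm.sign r = 1 := by
    rw [hr_def]
    simp only [map_mul, map_inv]
    rw [ht.sign, Equiv.Perm.mem_alternatingGroup.mp hs]
    group
  have hrN : (⟨r, Equiv.Perm.mem_alternatingGroup.mpr hsignr⟩ : alternatingGroup α) ∈ N := by
    have heq : (⟨r, Equiv.Perm.mem_alternatingGroup.mpr hsignr⟩ : alternatingGroup α)
        = (⟨t, ht.mem_alternatingGroup⟩ : alternatingGroup α) * ⟨s, hs⟩ *
          (⟨t, ht.mem_alternatingGroup⟩ : alternatingGroup α)⁻¹ *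
          (⟨s, hs⟩ : alternatingGroup α)⁻¹ := by
      apply Subtype.ext
      simp [hr_def]
    rw [heq]
    exact mul_mem (hN.conj_mem ⟨s, hs⟩ hsN ⟨t, ht.mem_alternatingGroup⟩) (inv_mem hsN)
  -- apply the key lemma with p := (· ∈ S)
  refine my_key h5 N hN (fun w => w ∈ S) ?_ r hsignr hr1 ?_ hrN
  · rw [my_card_indep (Subtype.fintype _) (Finset.Subtype.fintype S)]
    rw [Fintype.card_coe]
    exact hScard
  · intro w hw
    exact hFS (hsupp (Equiv.Perm.mem_support.mpr hw))

end Simple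
section Main

lemma my_eq_sq_sq {G : Type*} [Group G] (g : G) (h : orderOf g = 3) : g = (g * g) * (g * g) := by
  have h3 : g ^ 3 = 1 := by rw [← h]; exact pow_orderOf_eq_one g
  have h4 : (g * g) * (g * g) = g ^ 3 * g := by
    simp [pow_succ, mul_assoc]
  rw [h4, h3, one_mul]

lemma my_mk_orderOf {β : Type*} [Fintype β] [DecidableEq β] {f : Perm β}
    (hf : f.IsThreeCycle) (h : f ∈ alternatingGroup β) :
    orderOf (⟨f, h⟩ : alternatingGroup β) = 3 := by
  have h1 := orderOf_injective (alternatingGroup β).subtype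
    (Subgroup.subtype_injective _) ⟨f, h⟩
  rw [← h1]
  exact hf.orderOf

/-- Any proper subgroup of `A_n` (`n ≥ 5`) has index at least `n`. -/
lemma my_min_index {n : ℕ} (hn : 5 ≤ n) (K : Subgroup (alternatingGroup (Fin n)))
    (hK : K ≠ ⊤) : n ≤ K.index := by
  haveI : Nontrivial (Fin n) := Fin.nontrivial_iff_two_le.mpr (by omega)
  haveI := my_alternating_isSimpleGroup (α := Fin n) (by simpa using hn)
  let fq := MulAction.toPermHom (alternatingGroup (Fin n)) (alternatingGroup (Fin n) ⧸ K)
  have hker : fq.ker ≤ K := by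
    intro g hg
    rw [MonoidHom.mem_ker] at hg
    rw [← MulAction.stabilizer_quotient K, MulAction.mem_stabilizer_iff]
    calc g • ((1 : alternatingGroup (Fin n)) : alternatingGroup (Fin n) ⧸ K)
        = (fq g) ((1 : alternatingGroup (Fin n)) : alternatingGroup (Fin n) ⧸ K) := rfl
      _ = ((1 : alternatingGroup (Fin n)) : alternatingGroup (Fin n) ⧸ K) := by rw [hg]; rfl
  have hker_ne : fq.ker ≠ ⊤ := fun h => hK (top_le_iff.mp (h ▸ hker))
  have hker_bot : fq.ker = ⊥ := (fq.normal_ker.eq_bot_or_eq_top).resolve_right hker_ne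
  have hinj : Function.Injective fq := (fq.ker_eq_bot_iff).mp hker_bot
  letI : DecidableEq (alternatingGroup (Fin n) ⧸ K) := Classical.decEq _
  letI : Fintype (alternatingGroup (Fin n) ⧸ K) := Fintype.ofFinite _
  have hcard := Nat.card_le_card_of_injective fq hinj
  have hG2 : 2 * Nat.card (alternatingGroup (Fin n)) = n ! := by
    rw [Nat.card_eq_fintype_card, two_mul_card_alternatingGroup,
      Fintype.card_perm, Fintype.card_fin]
  have hPerm : Nat.card (Perm (alternatingGroup (Fin n) ⧸ K)) = (K.index)! := by
    rw [Nat.card_eq_fintype_card, Fintype.card_perm, ← Nat.card_eq_fintype_card]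
    rfl
  rw [hPerm] at hcard
  by_contra hlt
  push_neg at hlt
  obtain ⟨m, rfl⟩ : ∃ m, n = m + 1 := ⟨n - 1, by omega⟩
  have h1 : (K.index)! ≤ m ! := Nat.factorial_le (by omega)
  have h2 : (m + 1)! = (m + 1) * m ! := Nat.factorial_succ m
  have h3 : (m + 1) * m ! ≤ 2 * m ! := by
    calc (m + 1) * m ! = (m + 1)! := h2.symm
      _ = 2 * Nat.card (alternatingGroup (Fin (m + 1))) := hG2.symm
      _ ≤ 2 * (K.index)! := by omega
      _ ≤ 2 * m ! := by omega
  have h4 : m + 1 ≤ 2 := Nat.le_of_mul_le_mul_right h3 (Nat.factorial_pos _)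
  omega

end Main
set_option maxHeartbeats 1000000 in
/-- Proposition 2.3: for `n ≥ 4`, any subgroup `H` of index `n` in the alternating group
`A_n` is a maximal subgroup and is isomorphic to `A_{n-1}`. -/
theorem index_n_subgroup_of_alternating_isMaximal_and_iso (n : ℕ) (hn : 4 ≤ n)
    (H : Subgroup (alternatingGroup (Fin n))) (hH : H.index = n) :
    IsCoatom H ∧ Nonempty (H ≃* alternatingGroup (Fin (n - 1))) := by
  rcases eq_or_lt_of_le hn with h4 | h5
  · -- case n = 4
    subst h4
    constructor
    · constructor
      · intro h
        rw [h, Subgroup.index_top] at hH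
        norm_num at hH
      · intro K hK
        have hdvd : K.index ∣ 4 := by
          have hd := Subgroup.index_dvd_of_le hK.le
          rwa [hH] at hd
        have hKne : K.index ≠ 0 := Subgroup.index_ne_zero_of_finite
        have hle4 : K.index ≤ 4 := Nat.le_of_dvd (by norm_num) hdvd
        interval_cases h2 : K.index
        · omega
        · exact Subgroup.index_eq_one.mp h2
        · -- index 2: contradiction via 3-cycles
          exfalso
          have hthree : ∀ (f : Perm (Fin 4)) (hf : f.IsThreeCycle),
              (⟨f, hf.mem_alternatingGroup⟩ : alternatingGroup (Fin 4)) ∈ K := by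
            intro f hf
            have ho := my_mk_orderOf hf hf.mem_alternatingGroup
            have heq := my_eq_sq_sq _ ho
            rw [heq]
            exact Subgroup.mul_self_mem_of_index_two h2 _
          have htop := my_top_of_threeCycles K hthree
          rw [htop, Subgroup.index_top] at h2
          norm_num at h2
        · norm_num at hdvd
        · -- index 4: K = H, contradiction
          exfalso
          exact hK.ne (my_eq_of_le_of_index_eq hK.le (by omega) (by rw [hH, h2]))
    · -- isomorphism for n = 4
      have hG2 : 2 * Nat.card (alternatingGroup (Fin 4)) = 24 := by
        rw [Nat.card_eq_fintype_card, two_mul_card_alternatingGroup,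
          Fintype.card_perm, Fintype.card_fin]
        norm_num [Nat.factorial]
      have hcardH : Nat.card H = 3 := by
        have h1 := Subgroup.card_mul_index H
        rw [hH] at h1
        omega
      have hcard3 : Nat.card (alternatingGroup (Fin 3)) = 3 := by
        have h1 : 2 * Nat.card (alternatingGroup (Fin 3)) = 6 := by
          rw [Nat.card_eq_fintype_card, two_mul_card_alternatingGroup,
            Fintype.card_perm, Fintype.card_fin]
          norm_num [Nat.factorial]
        omega
      haveI : Fact (Nat.Prime 3) := ⟨by norm_num⟩
      haveI : IsCyclic H := isCyclic_of_prime_card hcardH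
      haveI : IsCyclic (alternatingGroup (Fin 3)) := isCyclic_of_prime_card hcard3
      exact ⟨mulEquivOfCyclicCardEq (by rw [hcardH, hcard3])⟩
  · -- case 5 ≤ n
    have h5' : 5 ≤ n := h5
    haveI : Nontrivial (Fin n) := Fin.nontrivial_iff_two_le.mpr (by omega)
    haveI := my_alternating_isSimpleGroup (α := Fin n) (by simpa using h5')
    have hHne : H ≠ ⊤ := by
      intro h
      rw [h, Subgroup.index_top] at hH
      omega
    constructor
    · -- maximality
      refine ⟨hHne, ?_⟩
      intro K hK
      by_cases hKtop : K = ⊤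
      · exact hKtop
      exfalso
      have hdvd : K.index ∣ n := by
        have hd := Subgroup.index_dvd_of_le hK.le
        rwa [hH] at hd
      have hge : n ≤ K.index := my_min_index h5' K hKtop
      have hle : K.index ≤ n := Nat.le_of_dvd (by omega) hdvd
      exact hK.ne (my_eq_of_le_of_index_eq hK.le (by omega) (by omega))
    · -- isomorphism
      letI : DecidableEq (alternatingGroup (Fin n) ⧸ H) := Classical.decEq _
      letI : Fintype (alternatingGroup (Fin n) ⧸ H) := Fintype.ofFinite _
      have hcardX : Fintype.card (alternatingGroup (Fin n) ⧸ H) = n := by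
        rw [← Nat.card_eq_fintype_card]
        exact hH
      haveI : Nontrivial (alternatingGroup (Fin n) ⧸ H) :=
        Fintype.one_lt_card_iff_nontrivial.mp (by omega)
      let fq := MulAction.toPermHom (alternatingGroup (Fin n))
        (alternatingGroup (Fin n) ⧸ H)
      have hker : fq.ker ≤ H := by
        intro g hg
        rw [MonoidHom.mem_ker] at hg
        rw [← MulAction.stabilizer_quotient H, MulAction.mem_stabilizer_iff]
        calc g • ((1 : alternatingGroup (Fin n)) : alternatingGroup (Fin n) ⧸ H)
            = (fq g) ((1 : alternatingGroup (Fin n)) : alternatingGroup (Fin n) ⧸ H) := rfl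
          _ = ((1 : alternatingGroup (Fin n)) : alternatingGroup (Fin n) ⧸ H) := by rw [hg]; rfl
      have hker_ne : fq.ker ≠ ⊤ := fun h => hHne (top_le_iff.mp (h ▸ hker))
      have hker_bot : fq.ker = ⊥ := (fq.normal_ker.eq_bot_or_eq_top).resolve_right hker_ne
      have hinj : Function.Injective fq := (fq.ker_eq_bot_iff).mp hker_bot
      -- cardinalities
      have hG2 : 2 * Nat.card (alternatingGroup (Fin n)) = n ! := by
        rw [Nat.card_eq_fintype_card, two_mul_card_alternatingGroup,
          Fintype.card_perm, Fintype.card_fin]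
      have hGpos : 0 < Nat.card (alternatingGroup (Fin n)) := Nat.card_pos
      have hPermcard : Nat.card (Perm (alternatingGroup (Fin n) ⧸ H)) = n ! := by
        rw [Nat.card_eq_fintype_card, Fintype.card_perm, hcardX]
      have hrangecard : Nat.card fq.range = Nat.card (alternatingGroup (Fin n)) :=
        (Nat.card_congr (MonoidHom.ofInjective hinj).toEquiv).symm
      have hrindex : fq.range.index = 2 := by
        have h1 := Subgroup.index_mul_card fq.range
        rw [hrangecard, hPermcard] at h1
        have h2 : fq.range.index * Nat.card (alternatingGroup (Fin n))
            = 2 * Nat.card (alternatingGroup (Fin n)) := by rw [h1, hG2]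
        exact Nat.eq_of_mul_eq_mul_right hGpos h2
      have haltcard : 2 * Nat.card (alternatingGroup (alternatingGroup (Fin n) ⧸ H)) = n ! := by
        rw [Nat.card_eq_fintype_card, two_mul_card_alternatingGroup,
          Fintype.card_perm, hcardX]
      have haltpos : 0 < Nat.card (alternatingGroup (alternatingGroup (Fin n) ⧸ H)) :=
        Nat.card_pos
      have haindex : (alternatingGroup (alternatingGroup (Fin n) ⧸ H)).index = 2 := by
        have h1 := Subgroup.index_mul_card (alternatingGroup (alternatingGroup (Fin n) ⧸ H))
        rw [hPermcard] at h1
        have h2 : (alternatingGroup (alternatingGroup (Fin n) ⧸ H)).index *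
            Nat.card (alternatingGroup (alternatingGroup (Fin n) ⧸ H))
            = 2 * Nat.card (alternatingGroup (alternatingGroup (Fin n) ⧸ H)) := by
          rw [h1, haltcard]
        exact Nat.eq_of_mul_eq_mul_right haltpos h2
      -- the range is the alternating group
      have hrange : fq.range = alternatingGroup (alternatingGroup (Fin n) ⧸ H) := by
        have hcl : Subgroup.closure
            {σ : Perm (alternatingGroup (Fin n) ⧸ H) | σ.IsThreeCycle} ≤ fq.range := by
          refine (Subgroup.closure_le _).mpr ?_
          intro g hg
          have heq := my_eq_sq_sq g (Equiv.Perm.IsThreeCycle.orderOf hg)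
          rw [SetLike.mem_coe, heq]
          exact Subgroup.mul_self_mem_of_index_two hrindex _
        have hle : alternatingGroup (alternatingGroup (Fin n) ⧸ H) ≤ fq.range :=
          fun f hf => hcl (closure_three_cycles_eq_alternating.ge hf)
        exact (my_eq_of_le_of_index_eq hle (by rw [hrindex]; norm_num)
          (by rw [haindex, hrindex])).symm
      -- identify H.map fq with the stabilizer intersection
      have hmap : H.map fq = alternatingGroup (alternatingGroup (Fin n) ⧸ H) ⊓
          MulAction.stabilizer (Perm (alternatingGroup (Fin n) ⧸ H))
            ((1 : alternatingGroup (Fin n)) : alternatingGroup (Fin n) ⧸ H) := by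
        ext σ
        simp only [Subgroup.mem_map, Subgroup.mem_inf]
        constructor
        · rintro ⟨g, hg, rfl⟩
          constructor
          · rw [← hrange]
            exact ⟨g, rfl⟩
          · rw [MulAction.mem_stabilizer_iff]
            have h1 : (fq g) • ((1 : alternatingGroup (Fin n)) : alternatingGroup (Fin n) ⧸ H)
                = g • ((1 : alternatingGroup (Fin n)) : alternatingGroup (Fin n) ⧸ H) := rfl
            rw [h1]
            rw [← MulAction.stabilizer_quotient H] at hg
            exact hg
        · rintro ⟨h1, h2⟩
          rw [← hrange] at h1
          obtain ⟨g, rfl⟩ := h1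
          refine ⟨g, ?_, rfl⟩
          rw [MulAction.mem_stabilizer_iff] at h2
          have h3 : (fq g) • ((1 : alternatingGroup (Fin n)) : alternatingGroup (Fin n) ⧸ H)
              = g • ((1 : alternatingGroup (Fin n)) : alternatingGroup (Fin n) ⧸ H) := rfl
          rw [h3] at h2
          rw [← MulAction.stabilizer_quotient H]
          exact h2
      -- assemble the isomorphism
      have hcardsub : Fintype.card
          {x : alternatingGroup (Fin n) ⧸ H //
            x ≠ ((1 : alternatingGroup (Fin n)) : alternatingGroup (Fin n) ⧸ H)} = n - 1 := by
        have h1 := Fintype.card_subtype_compl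
          (fun x : alternatingGroup (Fin n) ⧸ H =>
            x = ((1 : alternatingGroup (Fin n)) : alternatingGroup (Fin n) ⧸ H))
        rw [Fintype.card_subtype_eq, hcardX] at h1
        exact h1
      exact ⟨((Subgroup.equivMapOfInjective H fq hinj).trans
        ((MulEquiv.subgroupCongr hmap).trans
          ((altStabEquiv _).symm.trans
            (alternatingCongr (Fintype.equivFinOfCardEq hcardsub)))))⟩
end

section
/- (Reformulated cluster magnification) Let K be a field of characteristic 0 with fixed algebraic closure K̄, and let L ⊆ K̄ be a finite extension of K of degree n with cluster size r, where the cluster size of L/K is defined as the index [N_G(H) : H] with G the Galois group of the Galois closure L̃ of L over K and H the subgroup of G fixing L pointwise. If F ⊆ K̄ is a Galois extension of K of degree d that is linearly disjoint from L̃ over K, then the compositum LF has degree n·d over K and its cluster size over K is r·d. -/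
open IntermediateField

section Helpers

variable {K E : Type*} [Field K] [Field E] [Algebra K E]

/-- fixed points of an AlgEquiv as an intermediate field -/
def fixedIF (g : E ≃ₐ[K] E) : IntermediateField K E where
  carrier := {x | g x = x}
  mul_mem' := fun {a b} ha hb => by simp only [Set.mem_setOf_eq, map_mul] at *; rw [ha, hb]
  add_mem' := fun {a b} ha hb => by simp only [Set.mem_setOf_eq, map_add] at *; rw [ha, hb]
  algebraMap_mem' := fun a => g.commutes a
  inv_mem' := fun a ha => by simp only [Set.mem_setOf_eq, map_inv₀] at *; rw [ha]

lemma mem_fixedIF {g : E ≃ₐ[K] E} {x : E} : x ∈ fixedIF g ↔ g x = x := Iff.rfl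

/-- comap along the valuation of a larger field is isomorphic to the original field -/
def comapValEquiv {S T : IntermediateField K E} (h : S ≤ T) :
    ↥(S.comap T.val) ≃ₐ[K] ↥S where
  toFun x := ⟨((x : ↥T) : E), x.2⟩
  invFun y := ⟨⟨(y : E), h y.2⟩, y.2⟩
  left_inv x := Subtype.ext (Subtype.ext rfl)
  right_inv y := rfl
  map_mul' x y := rfl
  map_add' x y := rfl
  commutes' x := rfl

lemma comap_val_sup (S T M : IntermediateField K E) (hS : S ≤ M) (hT : T ≤ M) :
    S.comap M.val ⊔ T.comap M.val = (S ⊔ T).comap M.val := by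
  apply IntermediateField.map_injective M.val
  rw [IntermediateField.map_sup,
    map_comap_eq_self (by rw [fieldRange_val]; exact hS),
    map_comap_eq_self (by rw [fieldRange_val]; exact hT),
    map_comap_eq_self (by rw [fieldRange_val]; exact sup_le hS hT)]

lemma comap_val_self (M : IntermediateField K E) : M.comap M.val = ⊤ := by
  ext x
  exact iff_of_true x.2 trivial

end Helpers

lemma relindex_mul_card {G : Type*} [Group G] {A B : Subgroup G} (h : A ≤ B) :
    A.relIndex B * Nat.card A = Nat.card B := by
  rw [Subgroup.relIndex, mul_comm,
    ← Nat.card_congr (Subgroup.subgroupOfEquivOfLe h).toEquiv]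
  exact Subgroup.card_mul_index (A.subgroupOf B)

lemma normalizer_prod_bot {G G₂ : Type*} [Group G] [Group G₂] (H : Subgroup G) :
    Subgroup.normalizer ((H.prod (⊥ : Subgroup G₂) : Subgroup (G × G₂)) : Set (G × G₂))
      = (Subgroup.normalizer (H : Set G)).prod ⊤ := by
  ext ⟨a, b⟩
  simp only [Subgroup.mem_prod, Subgroup.mem_top, and_true, Subgroup.mem_normalizer_iff,
    SetLike.mem_coe]
  constructor
  · intro hcond x
    have := hcond (x, 1)
    simpa [Subgroup.mem_prod, Prod.ext_iff] using this
  · intro ha x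
    obtain ⟨x1, x2⟩ := x
    simp only [Subgroup.mem_prod, Subgroup.mem_bot, Prod.mk_mul_mk, Prod.mk.injEq,
      Prod.inv_mk, Prod.ext_iff]
    constructor
    · rintro ⟨hx1, rfl⟩
      exact ⟨(ha x1).mp hx1, by group⟩
    · rintro ⟨hx1, hx2⟩
      refine ⟨(ha x1).mpr hx1, ?_⟩
      have : b * x2 * b⁻¹ = 1 := hx2
      simpa [mul_assoc] using congrArg (fun z => b⁻¹ * z * b) this

lemma infinite_aut_of_not_finiteDimensional (K M : Type*) [Field K] [Field M] [Algebra K M]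
    [IsGalois K M] (h : ¬ FiniteDimensional K M) : Infinite (M ≃ₐ[K] M) := by
  by_contra hfin
  rw [not_infinite_iff_finite] at hfin
  set G := M ≃ₐ[K] M
  haveI : Finite G := hfin
  set E := FixedPoints.subfield G M with hE
  haveI : FiniteDimensional E M := inferInstance
  have hfix : ∀ x : M, (∀ g : G, g x = x) → x ∈ Set.range (algebraMap K M) := by
    intro x hx
    by_contra hxK
    have hint : IsIntegral K x := Algebra.IsIntegral.isIntegral x
    have hsep : (minpoly K x).Separable := Algebra.IsSeparable.isSeparable K x
    have hd1 : (minpoly K x).natDegree ≠ 1 := by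
      intro h1
      exact hxK (by simpa using minpoly.natDegree_eq_one_iff.mp h1)
    have hdeg : 1 < (minpoly K x).natDegree := by
      have := minpoly.natDegree_pos hint
      omega
    set p := (minpoly K x).map (algebraMap K M) with hp
    have hpne : p ≠ 0 := Polynomial.map_ne_zero (minpoly.ne_zero hint)
    have hsplit : ((minpoly K x).map (algebraMap K M)).Splits :=
      Normal.splits inferInstance x
    have hcard : p.roots.card = (minpoly K x).natDegree :=
      by rw [← hsplit.natDegree_eq_card_roots, Polynomial.natDegree_map]
    classical
    have hnodup : p.roots.Nodup := Polynomial.nodup_roots (hsep.map)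
    have hxroot : x ∈ p.roots.toFinset := by
      rw [Multiset.mem_toFinset, Polynomial.mem_roots hpne]
      simpa [hp, Polynomial.IsRoot, Polynomial.eval_map, Polynomial.aeval_def] using
        minpoly.aeval K x
    have h1lt : 1 < p.roots.toFinset.card := by
      rwa [Multiset.toFinset_card_of_nodup hnodup, hcard]
    obtain ⟨y, hy, hyx⟩ := Finset.exists_mem_ne h1lt x
    have hyroot : (Polynomial.aeval y) (minpoly K x) = 0 := by
      rw [Multiset.mem_toFinset, Polynomial.mem_roots hpne] at hy
      simpa [hp, Polynomial.IsRoot, Polynomial.eval_map, Polynomial.aeval_def] using hy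
    obtain ⟨σ, hσ⟩ := minpoly.exists_algEquiv_of_root' (hint.isAlgebraic) hyroot
    exact hyx (by rw [← hσ, hx σ])
  obtain ⟨s, hs⟩ := Module.finite_def.mp (inferInstance : Module.Finite E M)
  apply h
  refine ⟨⟨s, ?_⟩⟩
  rw [eq_top_iff]
  rintro x -
  have hx : x ∈ Submodule.span E (↑s : Set M) := by rw [hs]; trivial
  refine Submodule.span_induction (fun m hm => Submodule.subset_span hm)
    (Submodule.zero_mem _) (fun a b _ _ ha hb => Submodule.add_mem _ ha hb) ?_ hx
  intro e m _ hm
  obtain ⟨k, hk⟩ := hfix (e : M) (fun g => e.2 g)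
  have : (e : M) • m = k • m := by
    rw [← hk]; simp [Algebra.smul_def]
  rw [show e • m = (e : M) • m from rfl, this]
  exact Submodule.smul_mem _ _ hm

lemma infinite_fixingSubgroup {K M : Type*} [Field K] [Field M] [Algebra K M] [CharZero K]
    [Normal K M] [Algebra.IsAlgebraic K M]
    (A : IntermediateField K M) [FiniteDimensional K ↥A]
    (h : ¬ FiniteDimensional K M) : Infinite ↥A.fixingSubgroup := by
  haveI : Normal ↥A M := Normal.tower_top_of_normal K ↥A M
  haveI : CharZero ↥A := charZero_of_injective_algebraMap (algebraMap K ↥A).injective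
  haveI : Algebra.IsIntegral ↥A M := Algebra.IsAlgebraic.isIntegral
  haveI : IsGalois ↥A M := ⟨⟩
  have hnf : ¬ FiniteDimensional ↥A M := fun hf => h (FiniteDimensional.trans K ↥A M)
  haveI := infinite_aut_of_not_finiteDimensional ↥A M hnf
  exact Infinite.of_injective (IntermediateField.fixingSubgroupEquiv A).symm.toEquiv
    (IntermediateField.fixingSubgroupEquiv A).symm.injective

lemma relindex_eq_zero_of_infinite_subgroup {G : Type*} [Group G] {H' W : Subgroup G}
    [Infinite ↥W] (hWN : W ≤ Subgroup.normalizer (H' : Set G)) (htriv : ∀ g ∈ W, g ∈ H' → g = 1) :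
    H'.relIndex (Subgroup.normalizer (H' : Set G)) = 0 := by
  have hinj : Function.Injective (fun w : ↥W =>
      (QuotientGroup.mk ⟨(w : G), hWN w.2⟩ :
        ↥(Subgroup.normalizer (H' : Set G)) ⧸
          H'.subgroupOf (Subgroup.normalizer (H' : Set G)))) := by
    intro w1 w2 hq
    simp only [QuotientGroup.eq] at hq
    have hmem : ((w1 : G))⁻¹ * w2 ∈ H' := hq
    have hW12 : ((w1 : G))⁻¹ * w2 ∈ W := mul_mem (inv_mem w1.2) w2.2
    exact Subtype.ext (inv_mul_eq_one.mp (htriv _ hW12 hmem))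
  haveI : Infinite (↥(Subgroup.normalizer (H' : Set G)) ⧸
      H'.subgroupOf (Subgroup.normalizer (H' : Set G))) :=
    Infinite.of_injective _ hinj
  rw [Subgroup.relIndex, Subgroup.index]
  exact Nat.card_eq_zero_of_infinite

set_option maxHeartbeats 1000000 in
set_option synthInstance.maxHeartbeats 200000 in
/-- Reformulated cluster magnification: let `L/K` (inside a fixed algebraic closure of the
characteristic-zero field `K`) be finite of degree `n` with cluster size `r`, where the
cluster size is the index `[N_G(H) : H]` with `G` the Galois group of the Galois closure `L̃`
of `L` over `K` and `H` the subgroup fixing `L` pointwise. If `F/K` is Galois of degree `d`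
and linearly disjoint from `L̃` over `K`, then the compositum `LF` has degree `n·d` over `K`
and cluster size `r·d` over `K`. -/
theorem cluster_magnification_reformulated {K : Type*} [Field K] [CharZero K]
    (L : IntermediateField K (AlgebraicClosure K)) [FiniteDimensional K L]
    (n : ℕ) (hn : Module.finrank K L = n)
    (Ltil : IntermediateField K (AlgebraicClosure K))
    (hLtil : Ltil = normalClosure K L (AlgebraicClosure K))
    (H : Subgroup (Ltil ≃ₐ[K] Ltil))
    (hH : ∀ g : Ltil ≃ₐ[K] Ltil, g ∈ H ↔ ∀ x : Ltil, (x : AlgebraicClosure K) ∈ L → g x = x)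
    (r : ℕ) (hr : H.relIndex (Subgroup.normalizer (H : Set (Ltil ≃ₐ[K] Ltil))) = r)
    (F : IntermediateField K (AlgebraicClosure K)) [IsGalois K F]
    (d : ℕ) (hd : Module.finrank K F = d)
    (hdisj : F.LinearDisjoint Ltil)
    (Mtil : IntermediateField K (AlgebraicClosure K))
    (hMtil : Mtil = normalClosure K ↥(L ⊔ F) (AlgebraicClosure K))
    (H' : Subgroup (Mtil ≃ₐ[K] Mtil))
    (hH' : ∀ g : Mtil ≃ₐ[K] Mtil, g ∈ H' ↔ ∀ x : Mtil, (x : AlgebraicClosure K) ∈ L ⊔ F → g x = x) :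
    Module.finrank K ↥(L ⊔ F) = n * d ∧ H'.relIndex (Subgroup.normalizer (H' : Set (Mtil ≃ₐ[K] Mtil))) = r * d := by
  -- basic instances
  haveI hnormLtil : Normal K ↥Ltil := by rw [hLtil]; infer_instance
  haveI hfinLtil : FiniteDimensional K ↥Ltil := by rw [hLtil]; infer_instance
  haveI : IsGalois K ↥Ltil := ⟨⟩
  haveI hnormMtil : Normal K ↥Mtil := by rw [hMtil]; infer_instance
  haveI : IsGalois K ↥Mtil := ⟨⟩
  have hLle : L ≤ Ltil := by rw [hLtil]; exact le_normalClosure L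
  -- Fact A : Mtil = Ltil ⊔ F
  have hFactA : Mtil = Ltil ⊔ F := by
    apply le_antisymm
    · rw [hMtil]
      haveI : Normal K ↥(Ltil ⊔ F) := by
        haveI : Normal K ↥F := inferInstance
        infer_instance
      rw [normalClosure_le_iff_of_normal]
      exact sup_le (hLle.trans le_sup_left) le_sup_right
    · apply sup_le
      · rw [hMtil, hLtil]
        exact normalClosure_mono _ _ le_sup_left
      · rw [hMtil]
        exact le_sup_right.trans (le_normalClosure _)
  have hLleM : L ≤ Mtil := hLle.trans (hFactA ▸ le_sup_left)
  have hFleM : F ≤ Mtil := hFactA ▸ le_sup_right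
  have hLFleM : L ⊔ F ≤ Mtil := sup_le hLleM hFleM
  have hLtilleM : Ltil ≤ Mtil := hFactA ▸ le_sup_left
  -- Part 1
  have hLD : L.LinearDisjoint F := hdisj.symm.of_le hLle le_rfl
  have part1 : Module.finrank K ↥(L ⊔ F) = n * d := by
    rw [hLD.finrank_sup, hn, hd]
  refine ⟨part1, ?_⟩
  -- names for the comap'd fields inside Mtil
  set Ltil' : IntermediateField K ↥Mtil := Ltil.comap Mtil.val with hLtil'
  set F' : IntermediateField K ↥Mtil := F.comap Mtil.val with hF'
  set L'' : IntermediateField K ↥Mtil := L.comap Mtil.val with hL''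
  set LF' : IntermediateField K ↥Mtil := (L ⊔ F).comap Mtil.val with hLF'
  have hLF'sup : L'' ⊔ F' = LF' := comap_val_sup L F Mtil hLleM hFleM
  have hLtilF'sup : Ltil' ⊔ F' = ⊤ := by
    rw [hLtil', hF', comap_val_sup Ltil F Mtil hLtilleM hFleM, ← hFactA, comap_val_self]
  have hLtilLF'sup : Ltil' ⊔ LF' = ⊤ := by
    rw [hLtil', hLF', comap_val_sup Ltil (L ⊔ F) Mtil hLtilleM hLFleM]
    have : Ltil ⊔ (L ⊔ F) = Mtil := by
      rw [hFactA]
      rw [← sup_assoc, sup_of_le_left hLle]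
    rw [this, comap_val_self]
  -- membership of H' via LF'
  have hH'mem : ∀ g : ↥Mtil ≃ₐ[K] ↥Mtil, g ∈ H' ↔ LF' ≤ fixedIF g := by
    intro g
    rw [hH' g]
    constructor
    · intro hg x hx
      exact hg x hx
    · intro hg x hx
      exact hg hx
  -- F' is normal, hence stable under all automorphisms of Mtil
  haveI : Normal K ↥F' := Normal.of_algEquiv (comapValEquiv hFleM).symm
  have hF'stable : ∀ σ : ↥Mtil ≃ₐ[K] ↥Mtil, F'.map ↑σ = F' :=
    normal_iff_forall_map_eq'.mp inferInstance
  have hL''le : L'' ≤ Ltil' := fun x hx => hLle hx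
  by_cases hFfin : FiniteDimensional K ↥F
  · -- finite case
    haveI : FiniteDimensional K ↥F := hFfin
    haveI : FiniteDimensional K ↥(L ⊔ F) := IntermediateField.finiteDimensional_sup L F
    haveI hfinM : FiniteDimensional K ↥Mtil := by rw [hMtil]; infer_instance
    letI : Algebra ↥Ltil ↥Mtil := (IntermediateField.inclusion hLtilleM).toAlgebra
    letI : Algebra ↥F ↥Mtil := (IntermediateField.inclusion hFleM).toAlgebra
    haveI : IsScalarTower K ↥Ltil ↥Mtil :=
      IsScalarTower.of_algebraMap_eq (fun x => Subtype.ext rfl)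
    haveI : IsScalarTower K ↥F ↥Mtil :=
      IsScalarTower.of_algebraMap_eq (fun x => Subtype.ext rfl)
    set ψ : (↥Mtil ≃ₐ[K] ↥Mtil) →* (↥Ltil ≃ₐ[K] ↥Ltil) × (↥F ≃ₐ[K] ↥F) :=
      (AlgEquiv.restrictNormalHom (↥Ltil)).prod (AlgEquiv.restrictNormalHom (↥F)) with hψ
    have hcomm1 : ∀ (g : ↥Mtil ≃ₐ[K] ↥Mtil) (y : ↥Ltil),
        (((ψ g).1 y : ↥Ltil) : AlgebraicClosure K)
          = ((g (IntermediateField.inclusion hLtilleM y) : ↥Mtil) : AlgebraicClosure K) := by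
      intro g y
      have h0 := AlgEquiv.restrictNormal_commutes g (↥Ltil) y
      exact congrArg (fun z : ↥Mtil => (z : AlgebraicClosure K)) h0
    have hcomm2 : ∀ (g : ↥Mtil ≃ₐ[K] ↥Mtil) (y : ↥F),
        (((ψ g).2 y : ↥F) : AlgebraicClosure K)
          = ((g (IntermediateField.inclusion hFleM y) : ↥Mtil) : AlgebraicClosure K) := by
      intro g y
      have h0 := AlgEquiv.restrictNormal_commutes g (↥F) y
      exact congrArg (fun z : ↥Mtil => (z : AlgebraicClosure K)) h0
    -- membership characterization of H' via psi
    have hiff : ∀ g : ↥Mtil ≃ₐ[K] ↥Mtil,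
        g ∈ H' ↔ ψ g ∈ H.prod (⊥ : Subgroup (↥F ≃ₐ[K] ↥F)) := by
      intro g
      rw [hH'mem, Subgroup.mem_prod, Subgroup.mem_bot]
      constructor
      · intro hg
        constructor
        · rw [hH]
          intro y hy
          have hmem : (IntermediateField.inclusion hLtilleM) y ∈ LF' := by
            show ((IntermediateField.inclusion hLtilleM y : ↥Mtil) : AlgebraicClosure K) ∈ L ⊔ F
            rw [IntermediateField.coe_inclusion]
            exact (le_sup_left : L ≤ L ⊔ F) hy
          have hfx : g ((IntermediateField.inclusion hLtilleM) y)
              = (IntermediateField.inclusion hLtilleM) y := hg hmem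
          apply Subtype.ext
          rw [hcomm1 g y, hfx, IntermediateField.coe_inclusion]
        · apply AlgEquiv.ext
          intro z
          have hmem : (IntermediateField.inclusion hFleM) z ∈ LF' := by
            show ((IntermediateField.inclusion hFleM z : ↥Mtil) : AlgebraicClosure K) ∈ L ⊔ F
            rw [IntermediateField.coe_inclusion]
            exact (le_sup_right : F ≤ L ⊔ F) z.2
          have hfx : g ((IntermediateField.inclusion hFleM) z)
              = (IntermediateField.inclusion hFleM) z := hg hmem
          apply Subtype.ext
          show (((ψ g).2 z : ↥F) : AlgebraicClosure K) = ((z : ↥F) : AlgebraicClosure K)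
          rw [hcomm2 g z, hfx, IntermediateField.coe_inclusion]
      · rintro ⟨hgH, hg2⟩
        have hfixL : L'' ≤ fixedIF g := by
          intro x hx
          have hx' : (x : AlgebraicClosure K) ∈ L := hx
          set y : ↥Ltil := ⟨(x : AlgebraicClosure K), hLle hx'⟩ with hy
          have hxy : (IntermediateField.inclusion hLtilleM) y = x := Subtype.ext rfl
          have h2 : (ψ g).1 y = y := (hH _).mp hgH y hx'
          show g x = x
          apply Subtype.ext
          rw [← hxy]
          calc ((g ((IntermediateField.inclusion hLtilleM) y) : ↥Mtil) : AlgebraicClosure K)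
              = (((ψ g).1 y : ↥Ltil) : AlgebraicClosure K) := (hcomm1 g y).symm
            _ = ((y : ↥Ltil) : AlgebraicClosure K) := by rw [h2]
            _ = ((IntermediateField.inclusion hLtilleM y : ↥Mtil) : AlgebraicClosure K) := by
                rw [IntermediateField.coe_inclusion]
        have hfixF : F' ≤ fixedIF g := by
          intro x hx
          have hx' : (x : AlgebraicClosure K) ∈ F := hx
          set y : ↥F := ⟨(x : AlgebraicClosure K), hx'⟩ with hy
          have hxy : (IntermediateField.inclusion hFleM) y = x := Subtype.ext rfl
          have h2 : (ψ g).2 y = y := by rw [hg2]; rfl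
          show g x = x
          apply Subtype.ext
          rw [← hxy]
          calc ((g ((IntermediateField.inclusion hFleM) y) : ↥Mtil) : AlgebraicClosure K)
              = (((ψ g).2 y : ↥F) : AlgebraicClosure K) := (hcomm2 g y).symm
            _ = ((y : ↥F) : AlgebraicClosure K) := by rw [h2]
            _ = ((IntermediateField.inclusion hFleM y : ↥Mtil) : AlgebraicClosure K) := by
                rw [IntermediateField.coe_inclusion]
        rw [← hLF'sup]
        exact sup_le hfixL hfixF
    -- injectivity
    have hψinj : Function.Injective ψ := by
      rw [injective_iff_map_eq_one]
      intro g hg1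
      have e1 : (ψ g).1 = 1 := by rw [hg1]; rfl
      have e2 : (ψ g).2 = 1 := by rw [hg1]; rfl
      have hfixLtil : Ltil' ≤ fixedIF g := by
        intro x hx
        have hx' : (x : AlgebraicClosure K) ∈ Ltil := hx
        set y : ↥Ltil := ⟨(x : AlgebraicClosure K), hx'⟩ with hy
        have hxy : (IntermediateField.inclusion hLtilleM) y = x := Subtype.ext rfl
        have h2 : (ψ g).1 y = y := by rw [e1]; rfl
        show g x = x
        apply Subtype.ext
        rw [← hxy]
        calc ((g ((IntermediateField.inclusion hLtilleM) y) : ↥Mtil) : AlgebraicClosure K)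
            = (((ψ g).1 y : ↥Ltil) : AlgebraicClosure K) := (hcomm1 g y).symm
          _ = ((y : ↥Ltil) : AlgebraicClosure K) := by rw [h2]
          _ = ((IntermediateField.inclusion hLtilleM y : ↥Mtil) : AlgebraicClosure K) := by
              rw [IntermediateField.coe_inclusion]
      have hfixF : F' ≤ fixedIF g := by
        intro x hx
        have hx' : (x : AlgebraicClosure K) ∈ F := hx
        set y : ↥F := ⟨(x : AlgebraicClosure K), hx'⟩ with hy
        have hxy : (IntermediateField.inclusion hFleM) y = x := Subtype.ext rfl
        have h2 : (ψ g).2 y = y := by rw [e2]; rfl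
        show g x = x
        apply Subtype.ext
        rw [← hxy]
        calc ((g ((IntermediateField.inclusion hFleM) y) : ↥Mtil) : AlgebraicClosure K)
            = (((ψ g).2 y : ↥F) : AlgebraicClosure K) := (hcomm2 g y).symm
          _ = ((y : ↥F) : AlgebraicClosure K) := by rw [h2]
          _ = ((IntermediateField.inclusion hFleM y : ↥Mtil) : AlgebraicClosure K) := by
              rw [IntermediateField.coe_inclusion]
      have htop : (⊤ : IntermediateField K ↥Mtil) ≤ fixedIF g := by
        rw [← hLtilF'sup]
        exact sup_le hfixLtil hfixF
      exact AlgEquiv.ext fun x => htop (IntermediateField.mem_top (x := x))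
    -- cardinality
    have hcard : Nat.card (↥Mtil ≃ₐ[K] ↥Mtil)
        = Nat.card ((↥Ltil ≃ₐ[K] ↥Ltil) × (↥F ≃ₐ[K] ↥F)) := by
      rw [Nat.card_prod, IsGalois.card_aut_eq_finrank, IsGalois.card_aut_eq_finrank,
        IsGalois.card_aut_eq_finrank]
      have h1 : Module.finrank K ↥Mtil = Module.finrank K ↥(Ltil ⊔ F) := by rw [hFactA]
      rw [h1, hdisj.symm.finrank_sup]
    have hψbij : Function.Bijective ψ :=
      (Nat.bijective_iff_injective_and_card ψ).mpr ⟨hψinj, hcard⟩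
    -- subgroup transport
    set P : Subgroup ((↥Ltil ≃ₐ[K] ↥Ltil) × (↥F ≃ₐ[K] ↥F)) := H.prod ⊥ with hP
    have hmapH' : H'.map ψ = P := by
      ext p
      constructor
      · rintro ⟨g, hg, rfl⟩
        exact (hiff g).mp hg
      · intro hp
        obtain ⟨g, rfl⟩ := hψbij.2 p
        exact ⟨g, (hiff g).mpr hp, rfl⟩
    have cardH' : Nat.card ↥H' = Nat.card ↥H := by
      rw [Nat.card_congr (Subgroup.equivMapOfInjective H' ψ hψinj).toEquiv, hmapH', hP,
        Nat.card_congr (Subgroup.prodEquiv H ⊥).toEquiv, Nat.card_prod, Subgroup.card_bot,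
        mul_one]
    have hNmap : (Subgroup.normalizer (H' : Set (↥Mtil ≃ₐ[K] ↥Mtil))).map ψ = (Subgroup.normalizer (H : Set (↥Ltil ≃ₐ[K] ↥Ltil))).prod ⊤ := by
      have hψeq : (MulEquiv.ofBijective ψ hψbij).toMonoidHom = ψ := MonoidHom.ext fun _ => rfl
      have heq := Subgroup.map_equiv_normalizer_eq H' (MulEquiv.ofBijective ψ hψbij)
      rw [hψeq] at heq
      rw [heq, hmapH', hP, normalizer_prod_bot]
    have cardN' : Nat.card ↥(Subgroup.normalizer (H' : Set (↥Mtil ≃ₐ[K] ↥Mtil)))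
        = Nat.card ↥(Subgroup.normalizer (H : Set (↥Ltil ≃ₐ[K] ↥Ltil))) * Nat.card (↥F ≃ₐ[K] ↥F) := by
      rw [Nat.card_congr (Subgroup.equivMapOfInjective (Subgroup.normalizer (H' : Set (↥Mtil ≃ₐ[K] ↥Mtil))) ψ hψinj).toEquiv, hNmap,
        Nat.card_congr (Subgroup.prodEquiv (Subgroup.normalizer (H : Set (↥Ltil ≃ₐ[K] ↥Ltil))) ⊤).toEquiv, Nat.card_prod,
        Subgroup.card_top]
    have hfin1 := relindex_mul_card (Subgroup.le_normalizer (H := H'))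
    have hfin2 := relindex_mul_card (Subgroup.le_normalizer (H := H))
    rw [hr] at hfin2
    have hdcard : Nat.card (↥F ≃ₐ[K] ↥F) = d := by
      rw [IsGalois.card_aut_eq_finrank, hd]
    have hpos : 0 < Nat.card ↥H' := Nat.card_pos
    have hkey : H'.relIndex (Subgroup.normalizer (H' : Set (↥Mtil ≃ₐ[K] ↥Mtil))) * Nat.card ↥H' = (r * d) * Nat.card ↥H' := by
      rw [hfin1, cardN', cardH', hdcard, ← hfin2]
      ring
    exact Nat.eq_of_mul_eq_mul_right hpos hkey
  · -- infinite case
    have hd0 : d = 0 := by rw [← hd]; exact Module.finrank_of_infinite_dimensional hFfin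
    rw [hd0, mul_zero]
    set W : Subgroup (↥Mtil ≃ₐ[K] ↥Mtil) := Ltil'.fixingSubgroup with hW
    have hWmem : ∀ g : ↥Mtil ≃ₐ[K] ↥Mtil, g ∈ W ↔ Ltil' ≤ fixedIF g := by
      intro g
      rw [hW, IntermediateField.mem_fixingSubgroup_iff]
      constructor
      · intro h x hx; exact h x hx
      · intro h x hx; exact h hx
    haveI : Algebra.IsAlgebraic K ↥Mtil := inferInstance
    haveI : FiniteDimensional K ↥Ltil' :=
      (comapValEquiv hLtilleM).symm.toLinearEquiv.finiteDimensional
    have hMnotfin : ¬ FiniteDimensional K ↥Mtil := by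
      intro hfin
      exact hFfin (FiniteDimensional.of_injective
        (IntermediateField.inclusion hFleM).toLinearMap
        (IntermediateField.inclusion_injective hFleM))
    haveI hWinf : Infinite ↥W := infinite_fixingSubgroup Ltil' hMnotfin
    -- for g in W, LF' is stable under g
    have hmapLF : ∀ g : ↥Mtil ≃ₐ[K] ↥Mtil, g ∈ W → LF'.map ↑g = LF' := by
      intro g hg
      have hL : L''.map ↑g = L'' := by
        have hfix : ∀ y : ↥Mtil, y ∈ L'' → g y = y :=
          fun y hy => ((hWmem g).mp hg) (hL''le hy)
        apply le_antisymm
        · rintro x ⟨y, hy, rfl⟩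
          have hy' : y ∈ L'' := hy
          show g y ∈ L''
          rw [hfix y hy']
          exact hy'
        · intro x hx
          exact ⟨x, hx, hfix x hx⟩
      rw [← hLF'sup, IntermediateField.map_sup, hF'stable g, hL]
    -- W is contained in the normalizer of H'
    have hWN : W ≤ (Subgroup.normalizer (H' : Set (↥Mtil ≃ₐ[K] ↥Mtil))) := by
      intro g hg
      rw [Subgroup.mem_normalizer_iff]
      intro h
      constructor
      · intro hh
        rw [hH'mem] at hh ⊢
        intro x hx
        have h1 : g⁻¹ x ∈ LF' := by
          rw [← hmapLF g⁻¹ (inv_mem hg)]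
          exact ⟨x, hx, rfl⟩
        show g (h (g⁻¹ x)) = x
        rw [hh h1]
        exact g.apply_symm_apply x
      · intro hh
        rw [hH'mem] at hh ⊢
        intro x hx
        have h2 : g x ∈ LF' := by
          rw [← hmapLF g hg]
          exact ⟨x, hx, rfl⟩
        have h3 := hh h2
        have h4 : g (h (g⁻¹ (g x))) = g x := h3
        have h5 : g⁻¹ (g x) = x := g.symm_apply_apply x
        rw [h5] at h4
        exact g.injective h4
    have htriv : ∀ g ∈ W, g ∈ H' → g = 1 := by
      intro g hgW hgH'
      have hfixall : (⊤ : IntermediateField K ↥Mtil) ≤ fixedIF g := by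
        rw [← hLtilLF'sup]
        exact sup_le ((hWmem _).mp hgW) ((hH'mem _).mp hgH')
      exact AlgEquiv.ext fun x => hfixall (IntermediateField.mem_top (x := x))
    exact relindex_eq_zero_of_infinite_subgroup hWN htriv
end

section
/- Let K be a field of characteristic 0 and f ∈ K[x] an irreducible quartic polynomial whose Galois group (of its splitting field over K) is isomorphic to the dihedral group D_4 of order 8. Then the root cluster size of f is 2, i.e., for any root α of f, exactly 2 of the 4 roots of f lie in K(α). -/
open Polynomial IntermediateField Module

set_option maxHeartbeats 1000000
set_option synthInstance.maxHeartbeats 1000000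

/-- An irreducible quartic polynomial over a field of characteristic zero whose Galois group
is the dihedral group of order 8 has root cluster size `2`: for any root `α`, exactly two of
the four roots lie in `K(α)`. -/
theorem cluster_size_two_of_quartic_dihedral {K : Type*} [Field K] [CharZero K]
    (f : K[X]) (hf : Irreducible f) (hdeg : f.natDegree = 4)
    (Kf : IntermediateField K (AlgebraicClosure K))
    (hKf : Kf = IntermediateField.adjoin K (f.rootSet (AlgebraicClosure K)))
    (hgal : Nonempty ((Kf ≃ₐ[K] Kf) ≃* DihedralGroup 4)) :
    ∀ α : AlgebraicClosure K, aeval α f = 0 →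
      {x : AlgebraicClosure K | aeval x f = 0 ∧ x ∈ K⟮α⟯}.ncard = 2 := by
  classical
  subst hKf
  intro α hα
  have hf0 : f ≠ 0 := hf.ne_zero
  have hsep : f.Separable := hf.separable
  have hsplit : (f.map (algebraMap K (AlgebraicClosure K))).Splits := IsAlgClosed.splits _
  set E : IntermediateField K (AlgebraicClosure K) := adjoin K (f.rootSet (AlgebraicClosure K)) with hE
  haveI hSF : IsSplittingField K E f := adjoin_rootSet_isSplittingField hsplit
  haveI : FiniteDimensional K E := IsSplittingField.finiteDimensional E f
  haveI : IsGalois K E := IsGalois.of_separable_splitting_field hsep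
  -- the root α as an element of E
  have hαE : α ∈ E := subset_adjoin K _ (by rw [mem_rootSet]; exact ⟨hf0, hα⟩)
  set α' : E := ⟨α, hαE⟩ with hα'def
  have hα' : aeval α' f = 0 := by
    have h1 : (algebraMap E (AlgebraicClosure K)) α' = α := rfl
    have := (aeval_algebraMap_eq_zero_iff (AlgebraicClosure K) α' f)
    rw [h1] at this
    exact this.mp hα
  have hint : IsIntegral K α' := IsIntegral.of_finite K α'
  set Fα : IntermediateField K E := adjoin K {α'} with hFα
  -- the minimal polynomial of α' has degree 4
  have hmindeg : (minpoly K α').natDegree = 4 := by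
    have hdvd : minpoly K α' ∣ f := minpoly.dvd K α' hα'
    have hassoc : Associated (minpoly K α') f :=
      (minpoly.irreducible hint).associated_of_dvd hf hdvd
    obtain ⟨u, hu⟩ := hassoc
    have : (minpoly K α').natDegree + (u : K[X]).natDegree = f.natDegree := by
      rw [← hu, natDegree_mul (minpoly.ne_zero hint) (Units.ne_zero u)]
    rw [natDegree_eq_zero_of_isUnit u.isUnit] at this
    omega
  have hfin4 : finrank K ↥Fα = 4 := by
    rw [hFα]; rw [adjoin.finrank hint, hmindeg]
  -- the Galois group has order 8
  obtain ⟨e⟩ := hgal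
  have hcard8 : Fintype.card (E ≃ₐ[K] E) = 8 := by
    rw [Fintype.card_congr e.toEquiv, DihedralGroup.card]
  have hrankE : finrank K E = 8 := by
    rw [← IsGalois.card_aut_eq_finrank, Nat.card_eq_fintype_card, hcard8]
  have ht : finrank K ↥Fα * finrank ↥Fα ↥E = finrank K E :=
    Module.finrank_mul_finrank K ↥Fα E
  have h2 : finrank ↥Fα ↥E = 2 := by
    rw [hfin4, hrankE] at ht; omega
  -- the fixing subgroup of Fα has order 2
  set H : Subgroup (E ≃ₐ[K] E) := fixingSubgroup Fα with hH
  have hHcard : Fintype.card H = 2 := by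
    rw [hH]
    rw [← Nat.card_eq_fintype_card, IsGalois.card_fixingSubgroup_eq_finrank Fα]
    exact h2
  have hFF : fixedField H = Fα := IsGalois.fixedField_fixingSubgroup Fα
  have hmemFF : ∀ y : E, y ∈ fixedField H ↔ ∀ τ : H, τ.1 y = y := fun y => Iff.rfl
  -- the action of H on the roots of f in E
  have hroot_mem : ∀ (τ : H) (x : E), x ∈ f.rootSet E → τ.1 x ∈ f.rootSet E := by
    intro τ x hx
    rw [mem_rootSet] at hx ⊢
    refine ⟨hf0, ?_⟩
    rw [aeval_algHom_apply, hx.2, map_zero]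
  letI : SMul H (f.rootSet E) := ⟨fun τ x => ⟨τ.1 x.1, hroot_mem τ x.1 x.2⟩⟩
  have hsmul_def : ∀ (τ : H) (x : f.rootSet E), (τ • x).1 = τ.1 x.1 := fun _ _ => rfl
  letI : MulAction H (f.rootSet E) :=
    { one_smul := fun x => Subtype.ext rfl
      mul_smul := fun τ σ x => Subtype.ext rfl }
  have hR4 : Nat.card (f.rootSet E) = 4 := by
    rw [Nat.card_eq_fintype_card, card_rootSet_eq_natDegree hsep (IsSplittingField.splits E f),
      hdeg]
  haveI : Fact (Nat.Prime 2) := ⟨Nat.prime_two⟩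
  have hPG : IsPGroup 2 H := IsPGroup.of_card (by
    rw [Nat.card_eq_fintype_card, hHcard, pow_one])
  have hmod := hPG.card_modEq_card_fixedPoints (f.rootSet E)
  set FP : Set (f.rootSet E) := MulAction.fixedPoints H (f.rootSet E) with hFP
  have hFPmem : ∀ x : f.rootSet E, x ∈ FP ↔ x.1 ∈ fixedField H := by
    intro x
    rw [hmemFF]
    constructor
    · intro h τ
      have := h τ
      rw [Subtype.ext_iff] at this
      exact this
    · intro h τ
      exact Subtype.ext (h τ)
  -- the number of fixed points is 2
  have hFP2 : Nat.card FP = 2 := by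
    have hle : Nat.card FP ≤ 4 := by
      rw [← hR4, Nat.card_coe_set_eq, ← Set.ncard_univ]
      exact Set.ncard_le_ncard (Set.subset_univ _) (Set.finite_univ)
    have hpos : 0 < Nat.card FP := by
      rw [Nat.card_coe_set_eq]
      rw [Set.ncard_pos (Set.toFinite _)]
      refine ⟨⟨α', by rw [mem_rootSet]; exact ⟨hf0, hα'⟩⟩, ?_⟩
      rw [hFPmem, hFF]
      exact subset_adjoin K {α'} rfl
    have hne : Nat.card FP ≠ 4 := by
      intro h4
      have huniv : FP = Set.univ := by
        have hfpn : FP.ncard = 4 := by rw [← Nat.card_coe_set_eq, h4]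
        apply Set.eq_of_subset_of_ncard_le (Set.subset_univ _)
        rw [Set.ncard_univ, hR4, hfpn]
      have hone : ∀ τ : H, τ.1 = 1 := by
        intro τ
        have hfix : ∀ y ∈ f.rootSet E, τ.1 y = y := by
          intro y hy
          have : (⟨y, hy⟩ : f.rootSet E) ∈ FP := huniv ▸ Set.mem_univ _
          rw [hFPmem] at this
          exact (hmemFF y).mp this τ
        have hadj : Algebra.adjoin K (f.rootSet E) ≤
            AlgHom.equalizer (τ.1 : E →ₐ[K] E) (AlgHom.id K E) :=
          Algebra.adjoin_le fun y hy => hfix y hy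
        rw [IsSplittingField.adjoin_rootSet E f] at hadj
        ext x
        have hx := hadj (Algebra.mem_top : x ∈ (⊤ : Subalgebra K E))
        simpa using congrArg Subtype.val hx
      have : Fintype.card H ≤ 1 :=
        Fintype.card_le_one_iff.mpr fun a b => Subtype.ext (by rw [hone a, hone b])
      omega
    have heven : Nat.card FP % 2 = 0 := by
      have := hmod
      rw [hR4] at this
      unfold Nat.ModEq at this
      omega
    omega
  -- translate back to the algebraic closure
  have hlift : lift Fα = K⟮α⟯ := by rw [hFα, lift_adjoin]; norm_num; rfl
  have hset : {x : AlgebraicClosure K | aeval x f = 0 ∧ x ∈ K⟮α⟯} =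
      (fun x : f.rootSet E => ((x.1 : E) : AlgebraicClosure K)) '' FP := by
    ext x
    simp only [Set.mem_setOf_eq, Set.mem_image]
    constructor
    · rintro ⟨hr, hm⟩
      have hxE : x ∈ E := subset_adjoin K _ (by rw [mem_rootSet]; exact ⟨hf0, hr⟩)
      have hxE' : aeval (⟨x, hxE⟩ : E) f = 0 := by
        have := (aeval_algebraMap_eq_zero_iff (AlgebraicClosure K) (⟨x, hxE⟩ : E) f)
        exact this.mp hr
      refine ⟨⟨⟨x, hxE⟩, by rw [mem_rootSet]; exact ⟨hf0, hxE'⟩⟩, ?_, rfl⟩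
      rw [hFPmem]
      rw [hFF]
      rw [← hlift] at hm
      exact (mem_lift (⟨x, hxE⟩ : E)).mp hm
    · rintro ⟨y, hyFP, rfl⟩
      have hy := y.2
      rw [mem_rootSet] at hy
      constructor
      · have := (aeval_algebraMap_eq_zero_iff (AlgebraicClosure K) (y.1 : E) f)
        exact this.mpr hy.2
      · rw [hFPmem, hFF] at hyFP
        rw [← hlift]
        exact (mem_lift (y.1 : E)).mpr hyFP
  rw [hset]
  have hinj : Function.Injective (fun x : f.rootSet E => ((x.1 : E) : AlgebraicClosure K)) := by
    intro a b hab
    exact Subtype.ext (Subtype.ext hab)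
  rw [Set.ncard_image_of_injective FP hinj, ← Nat.card_coe_set_eq, hFP2]
end

section
/- Let K be a field of characteristic 0 and f ∈ K[x] an irreducible polynomial of prime degree p. If the splitting field K_f of f satisfies [K_f : K] > p, then the root cluster size of f is 1, i.e., for every root α of f, α is the only root of f lying in K(α). -/
open Polynomial IntermediateField

set_option linter.unusedSectionVars false in
private lemma root_map' {K : Type*} [Field K] (f : K[X])
    {E F : IntermediateField K (AlgebraicClosure K)}
    (σ : E ≃ₐ[K] F) (x : E) (hx : aeval (x : AlgebraicClosure K) f = 0) :
    aeval ((σ x : F) : AlgebraicClosure K) f = 0 := by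
  have h1 : aeval x f = 0 := Subtype.ext (by
    rw [show ((aeval x f : E) : AlgebraicClosure K) = E.val (aeval x f) from rfl,
      ← Polynomial.aeval_algHom_apply E.val x f]
    exact hx)
  have h2 : aeval (σ x) f = 0 := by
    rw [show σ x = σ.toAlgHom x from rfl, Polynomial.aeval_algHom_apply, h1, map_zero]
  rw [show ((σ x : F) : AlgebraicClosure K) = F.val (σ x) from rfl,
    Polynomial.aeval_algHom_apply, h2, map_zero]

private lemma finrank_adjoin_root' {K : Type*} [Field K] (f : K[X]) (hf : Irreducible f)
    (α : AlgebraicClosure K) (hα : aeval α f = 0) :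
    Module.finrank K K⟮α⟯ = f.natDegree := by
  have hint : IsIntegral K α := Algebra.IsIntegral.isIntegral α
  rw [IntermediateField.adjoin.finrank hint, ← minpoly.eq_of_irreducible hf hα]
  have h0 : f.leadingCoeff⁻¹ ≠ 0 := inv_ne_zero (leadingCoeff_ne_zero.2 hf.ne_zero)
  simp [natDegree_mul_C, h0]

private lemma adjoin_eq_of_mem' {K : Type*} [Field K] (f : K[X]) (hf : Irreducible f)
    {α β : AlgebraicClosure K} (hα : aeval α f = 0) (hβ : aeval β f = 0)
    (hmem : β ∈ K⟮α⟯) : K⟮β⟯ = K⟮α⟯ := by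
  haveI : FiniteDimensional K K⟮α⟯ :=
    IntermediateField.adjoin.finiteDimensional (Algebra.IsIntegral.isIntegral α)
  refine IntermediateField.eq_of_le_of_finrank_eq ?_ ?_
  · rw [adjoin_simple_le_iff]; exact hmem
  · rw [finrank_adjoin_root' f hf α hα, finrank_adjoin_root' f hf β hβ]

private lemma cluster_card_eq' {K : Type*} [Field K] (f : K[X]) (hf : Irreducible f)
    {α β : AlgebraicClosure K} (hα : aeval α f = 0) (hβ : aeval β f = 0)
    (s : Finset (AlgebraicClosure K)) (hs : ∀ x, x ∈ s ↔ aeval x f = 0)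
    [DecidablePred (· ∈ K⟮α⟯)] [DecidablePred (· ∈ K⟮β⟯)] :
    (s.filter (· ∈ K⟮α⟯)).card = (s.filter (· ∈ K⟮β⟯)).card := by
  have hintα : IsIntegral K α := Algebra.IsIntegral.isIntegral α
  have hintβ : IsIntegral K β := Algebra.IsIntegral.isIntegral β
  have hm : minpoly K α = minpoly K β := by
    rw [← minpoly.eq_of_irreducible hf hα, ← minpoly.eq_of_irreducible hf hβ]
  let σ : K⟮α⟯ ≃ₐ[K] K⟮β⟯ :=
    (adjoinRootEquivAdjoin K hintα).symm.trans (hm ▸ adjoinRootEquivAdjoin K hintβ)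
  let τ : K⟮β⟯ ≃ₐ[K] K⟮α⟯ := σ.symm
  refine Finset.card_bij (fun a ha => (σ ⟨a, (Finset.mem_filter.1 ha).2⟩ : AlgebraicClosure K))
    ?_ ?_ ?_
  · intro a ha
    rw [Finset.mem_filter]
    refine ⟨(hs _).2 ?_, SetLike.coe_mem _⟩
    exact root_map' f σ _ ((hs a).1 (Finset.mem_filter.1 ha).1)
  · intro a ha b hb h
    have := σ.injective (Subtype.coe_injective h)
    exact congrArg Subtype.val this
  · intro b hb
    obtain ⟨hbs, hbm⟩ := Finset.mem_filter.1 hb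
    have hbroot := (hs b).1 hbs
    have h1 : aeval ((τ ⟨b, hbm⟩ : K⟮α⟯) : AlgebraicClosure K) f = 0 :=
      root_map' f τ _ hbroot
    refine ⟨(τ ⟨b, hbm⟩ : AlgebraicClosure K), ?_, ?_⟩
    · rw [Finset.mem_filter]
      exact ⟨(hs _).2 h1, SetLike.coe_mem _⟩
    · have h3 : σ (τ ⟨b, hbm⟩) = ⟨b, hbm⟩ := σ.apply_symm_apply _
      exact congrArg Subtype.val h3

/-- For an irreducible polynomial `f` of prime degree `p` over a field `K` of characteristic
zero, if the splitting field `K_f` satisfies `[K_f : K] > p`, then the root cluster size of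
`f` is `1`: every root `α` of `f` is the only root of `f` lying in `K(α)`. -/
theorem cluster_size_one_of_prime_degree {K : Type*} [Field K] [CharZero K]
    (f : K[X]) (hf : Irreducible f) (p : ℕ) (hp : p.Prime) (hdeg : f.natDegree = p)
    (Kf : IntermediateField K (AlgebraicClosure K))
    (hKf : Kf = IntermediateField.adjoin K (f.rootSet (AlgebraicClosure K)))
    (hbig : p < Module.finrank K Kf) :
    ∀ α : AlgebraicClosure K, aeval α f = 0 →
      {x : AlgebraicClosure K | aeval x f = 0 ∧ x ∈ K⟮α⟯} = {α} := by
  intro α hα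
  classical
  have hf0 : f ≠ 0 := hf.ne_zero
  set s : Finset (AlgebraicClosure K) := (f.aroots (AlgebraicClosure K)).toFinset with hs_def
  have hs : ∀ x, x ∈ s ↔ aeval x f = 0 := by
    intro x
    rw [hs_def, Multiset.mem_toFinset, mem_aroots]
    exact ⟨fun h => h.2, fun h => ⟨hf0, h⟩⟩
  have hcard : s.card = p := by
    rw [hs_def, Multiset.toFinset_card_of_nodup (nodup_roots hf.separable.map),
      ← (IsAlgClosed.splits (f.map (algebraMap K (AlgebraicClosure K)))).natDegree_eq_card_roots,
        natDegree_map, hdeg]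
  ext x
  simp only [Set.mem_setOf_eq, Set.mem_singleton_iff]
  constructor
  · rintro ⟨hx, hxm⟩
    by_contra hne
    -- cluster size r ≥ 2
    set r := (s.filter (· ∈ K⟮α⟯)).card with hr_def
    have hαs : α ∈ s.filter (· ∈ K⟮α⟯) :=
      Finset.mem_filter.2 ⟨(hs α).2 hα, mem_adjoin_simple_self K α⟩
    have hxs : x ∈ s.filter (· ∈ K⟮α⟯) := Finset.mem_filter.2 ⟨(hs x).2 hx, hxm⟩
    have h2r : 2 ≤ r := Finset.one_lt_card.2 ⟨x, hxs, α, hαs, hne⟩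
    -- r divides p
    have hsum : s.card = ∑ b ∈ s.image (fun y => K⟮y⟯),
        (s.filter (fun y => K⟮y⟯ = b)).card :=
      Finset.card_eq_sum_card_image _ s
    have hterm : ∀ b ∈ s.image (fun y => K⟮y⟯),
        (s.filter (fun y => K⟮y⟯ = b)).card = r := by
      intro b hb
      obtain ⟨γ, hγs, rfl⟩ := Finset.mem_image.1 hb
      have hγ : aeval γ f = 0 := (hs γ).1 hγs
      have hfeq : s.filter (fun y => K⟮y⟯ = K⟮γ⟯) = s.filter (· ∈ K⟮γ⟯) := by
        apply Finset.filter_congr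
        intro y hy
        have hyroot := (hs y).1 hy
        constructor
        · intro h; rw [← h]; exact mem_adjoin_simple_self K y
        · intro h; exact adjoin_eq_of_mem' f hf hγ hyroot h
      rw [hfeq, hr_def]
      exact cluster_card_eq' f hf hγ hα s hs
    have hdvd : r ∣ p := ⟨(s.image (fun y => K⟮y⟯)).card, by
      rw [← hcard, hsum, Finset.sum_congr rfl hterm, Finset.sum_const, smul_eq_mul, mul_comm]⟩
    have hrp : r = p := ((Nat.Prime.eq_one_or_self_of_dvd hp r hdvd).resolve_left
      (by omega))
    -- all roots in K⟮α⟯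
    have hall : s.filter (· ∈ K⟮α⟯) = s :=
      Finset.eq_of_subset_of_card_le (Finset.filter_subset _ _)
        (by rw [hcard, ← hrp])
    have hroots : ∀ y ∈ s, y ∈ K⟮α⟯ := by
      intro y hy
      have := hall ▸ hy
      exact (Finset.mem_filter.1 this).2
    -- Kf ≤ K⟮α⟯
    have hle : Kf ≤ K⟮α⟯ := by
      rw [hKf, adjoin_le_iff]
      intro y hy
      rw [mem_rootSet] at hy
      exact hroots y ((hs y).2 hy.2)
    haveI : FiniteDimensional K K⟮α⟯ :=
      IntermediateField.adjoin.finiteDimensional (Algebra.IsIntegral.isIntegral α)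
    have hfr : Module.finrank K Kf ≤ Module.finrank K K⟮α⟯ :=
      LinearMap.finrank_le_finrank_of_injective
        (f := (IntermediateField.inclusion hle).toLinearMap)
        (IntermediateField.inclusion_injective hle)
    rw [finrank_adjoin_root' f hf α hα, hdeg] at hfr
    omega
  · rintro rfl
    exact ⟨hα, mem_adjoin_simple_self K _⟩
end
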